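/- arXiv:2207.06925 — 2 statements merged into one kernel-verified Lean document; each statement's English description precedes it below -/
import Mathlib

section
/- Let P_1,...,P_k be s–t paths in an acyclic network D. The vertices of the smallest face of the flow polytope F(D) containing χ^{P_1},...,χ^{P_k} are exactly the vertices χ^R for s–t paths R whose arc set satisfies R ⊆ P_1 ∪ ... ∪ P_k. -/
open scoped Classical

set_option linter.unusedSectionVars false

variable {V : Type*} [Fintype V] [DecidableEq V]

/-- A directed graph (arc set `A`) is acyclic: no directed cycle. -/
def Acyclic (A : Finset (V × V)) : Prop :=
  ∀ v : V, ¬ Relation.TransGen (fun u w => (u, w) ∈ A) v v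

/-- Sum of `x` over the arcs of `A` with tail `v`. -/
noncomputable def outSum (A : Finset (V × V)) (x : V × V → ℝ) (v : V) : ℝ :=
  ∑ a ∈ A.filter (fun a => a.1 = v), x a

/-- Sum of `x` over the arcs of `A` with head `v`. -/
noncomputable def inSum (A : Finset (V × V)) (x : V × V → ℝ) (v : V) : ℝ :=
  ∑ a ∈ A.filter (fun a => a.2 = v), x a

/-- A flow of value 1 in the network `(V, A, s, t)`. -/
def IsFlow (A : Finset (V × V)) (s t : V) (x : V × V → ℝ) : Prop :=
  (∀ a, a ∉ A → x a = 0) ∧ (∀ a, 0 ≤ x a) ∧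
    (∀ v, v ≠ s → v ≠ t → outSum A x v = inSum A x v) ∧
    outSum A x s - inSum A x s = 1

/-- The flow polytope: all value-1 flows, as a subset of `ℝ^(V × V)`. -/
def flowPolytope (A : Finset (V × V)) (s t : V) : Set ((V × V) → ℝ) :=
  {x | IsFlow A s t x}

/-- An `s`–`t` path, given by its list of nodes. -/
def IsPath (A : Finset (V × V)) (s t : V) (p : List V) : Prop :=
  p.Chain' (fun u v => (u, v) ∈ A) ∧ p.head? = some s ∧ p.getLast? = some t ∧ p.Nodup

/-- The arcs of a path given by its node list. -/
def pathEdges (p : List V) : List (V × V) := p.zip p.tail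

/-- Characteristic vector of (the arc set of) a path. -/
def chi (p : List V) : (V × V) → ℝ := fun a => if a ∈ pathEdges p then 1 else 0


-- basics
lemma pathEdges_nil : pathEdges ([] : List V) = [] := rfl
lemma pathEdges_singleton (u : V) : pathEdges [u] = [] := rfl
lemma pathEdges_cons_cons (u w : V) (r : List V) :
    pathEdges (u :: w :: r) = (u, w) :: pathEdges (w :: r) := rfl

lemma mem_pathEdges {p : List V} {a : V × V} (h : a ∈ pathEdges p) :
    a.1 ∈ p.dropLast ∧ a.2 ∈ p.tail := by
  induction p with
  | nil => simp [pathEdges_nil] at h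
  | cons u q ih =>
    cases q with
    | nil => simp [pathEdges_singleton] at h
    | cons w r =>
      rw [pathEdges_cons_cons] at h
      rcases List.mem_cons.1 h with h | h
      · subst h; constructor
        · simp [List.dropLast]
        · simp
      · rcases ih h with ⟨h1, h2⟩
        constructor
        · simpa [List.dropLast] using Or.inr h1
        · exact List.mem_cons_of_mem _ h2

lemma chain'_of_pathEdges {r : V → V → Prop} {p : List V} (hc : p.Chain' r)
    {a : V × V} (h : a ∈ pathEdges p) : r a.1 a.2 := by
  induction p with
  | nil => simp [pathEdges_nil] at h
  | cons u q ih =>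
    cases q with
    | nil => simp [pathEdges_singleton] at h
    | cons w r'
    =>
      rw [pathEdges_cons_cons] at h
      rcases List.mem_cons.1 h with h | h
      · subst h; exact (List.isChain_cons_cons.1 hc).1
      · exact ih (List.isChain_cons_cons.1 hc).2 h

lemma pathEdges_nodup {p : List V} (h : p.Nodup) : (pathEdges p).Nodup := by
  induction p with
  | nil => simp [pathEdges_nil]
  | cons u q ih =>
    cases q with
    | nil => simp [pathEdges_singleton]
    | cons w r =>
      rw [pathEdges_cons_cons]
      refine List.nodup_cons.2 ⟨?_, ih (List.nodup_cons.1 h).2⟩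
      intro hmem
      have := (mem_pathEdges hmem).1
      exact (List.nodup_cons.1 h).1 (List.dropLast_subset _ this)

-- counting lemmas
lemma count_tail {p : List V} (hnd : p.Nodup) (v : V) :
    ((pathEdges p).filter (fun a => a.1 = v)).length
      = if v ∈ p.dropLast then 1 else 0 := by
  induction p with
  | nil => simp [pathEdges_nil]
  | cons u q ih =>
    cases q with
    | nil => simp [pathEdges_singleton, List.dropLast]
    | cons w r =>
      have hnd' := (List.nodup_cons.1 hnd).2
      have hu : u ∉ w :: r := (List.nodup_cons.1 hnd).1
      rw [pathEdges_cons_cons]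
      by_cases huv : u = v
      · subst huv
        have h0 : ((pathEdges (w :: r)).filter (fun a => a.1 = u)).length = 0 := by
          rw [ih hnd']
          simp only [ite_eq_right_iff]
          intro hmem
          exact absurd (List.dropLast_subset _ hmem) hu
        simp only [List.filter_cons, List.dropLast]
        simp [h0, List.dropLast]
      · simp only [List.filter_cons]
        have : ¬ ((u, w).1 = v) := huv
        simp only [decide_eq_true_eq, this, if_neg, ite_false]
        rw [ih hnd']
        have : (v ∈ (u :: w :: r).dropLast) ↔ (v ∈ (w :: r).dropLast) := by
          simp only [List.dropLast, List.mem_cons]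
          constructor
          · rintro (h | h)
            · exact absurd h.symm huv
            · exact h
          · exact Or.inr
        rw [if_congr this.symm rfl rfl]

lemma count_head {p : List V} (hnd : p.Nodup) (v : V) :
    ((pathEdges p).filter (fun a => a.2 = v)).length
      = if v ∈ p.tail then 1 else 0 := by
  induction p with
  | nil => simp [pathEdges_nil]
  | cons u q ih =>
    cases q with
    | nil => simp [pathEdges_singleton]
    | cons w r =>
      have hnd' := (List.nodup_cons.1 hnd).2
      rw [pathEdges_cons_cons]
      by_cases hwv : w = v
      · subst hwv
        have hw : w ∉ r := (List.nodup_cons.1 hnd').1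
        have h0 : ((pathEdges (w :: r)).filter (fun a => a.2 = w)).length = 0 := by
          rw [ih hnd']
          simp [hw]
        simp [List.filter_cons, h0]
      · simp only [List.filter_cons]
        have : ¬ ((u, w).2 = v) := hwv
        simp only [decide_eq_true_eq, this, if_neg, ite_false]
        rw [ih hnd']
        have : (v ∈ (u :: w :: r).tail) ↔ (v ∈ (w :: r).tail) := by
          simp only [List.tail, List.mem_cons]
          constructor
          · rintro (h | h)
            · exact absurd h.symm hwv
            · exact h
          · exact Or.inr
        rw [if_congr this.symm rfl rfl]

lemma eq_singleton_of_mem_length_le {α : Type*} {l : List α} {e : α}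
    (he : e ∈ l) (hl : l.length ≤ 1) : l = [e] := by
  cases l with
  | nil => simp at he
  | cons b m =>
    cases m with
    | nil => simp at he; rw [he]
    | cons c m' => simp at hl

lemma filter_tail_eq {p : List V} (hnd : p.Nodup) {e : V × V} (he : e ∈ pathEdges p) :
    (pathEdges p).filter (fun a => a.1 = e.1) = [e] := by
  apply eq_singleton_of_mem_length_le
  · simp [List.mem_filter, he]
  · rw [count_tail hnd]
    split <;> simp

lemma filter_head_eq {p : List V} (hnd : p.Nodup) {e : V × V} (he : e ∈ pathEdges p) :
    (pathEdges p).filter (fun a => a.2 = e.2) = [e] := by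
  apply eq_singleton_of_mem_length_le
  · simp [List.mem_filter, he]
  · rw [count_head hnd]
    split <;> simp

-- linearity of outSum/inSum
lemma outSum_comb (A : Finset (V × V)) (c d : ℝ) (x y : V × V → ℝ) (v : V) :
    outSum A (fun a => c * x a + d * y a) v = c * outSum A x v + d * outSum A y v := by
  simp [outSum, Finset.sum_add_distrib, Finset.mul_sum]

lemma inSum_comb (A : Finset (V × V)) (c d : ℝ) (x y : V × V → ℝ) (v : V) :
    inSum A (fun a => c * x a + d * y a) v = c * inSum A x v + d * inSum A y v := by
  simp [inSum, Finset.sum_add_distrib, Finset.mul_sum]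

lemma outSum_nonneg (A : Finset (V × V)) {x : V × V → ℝ} (hx : ∀ a, 0 ≤ x a) (v : V) :
    0 ≤ outSum A x v := Finset.sum_nonneg fun a _ => hx a

lemma inSum_nonneg (A : Finset (V × V)) {x : V × V → ℝ} (hx : ∀ a, 0 ≤ x a) (v : V) :
    0 ≤ inSum A x v := Finset.sum_nonneg fun a _ => hx a

-- chi sums
lemma outSum_chi {A : Finset (V × V)} {p : List V}
    (hc : p.Chain' (fun u v => (u, v) ∈ A)) (hnd : p.Nodup) (v : V) :
    outSum A (chi p) v = if v ∈ p.dropLast then 1 else 0 := by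
  have hsub : ∀ a ∈ pathEdges p, a ∈ A := fun a ha => chain'_of_pathEdges hc ha
  have key : (A.filter (fun a => a.1 = v)).filter (fun a => a ∈ pathEdges p)
      = ((pathEdges p).filter (fun a => a.1 = v)).toFinset := by
    ext a
    simp only [Finset.mem_filter, List.mem_toFinset, List.mem_filter, decide_eq_true_eq]
    constructor
    · rintro ⟨⟨_, h1⟩, h2⟩; exact ⟨h2, h1⟩
    · rintro ⟨h2, h1⟩; exact ⟨⟨hsub a h2, h1⟩, h2⟩
  have : outSum A (chi p) v
      = ((A.filter (fun a => a.1 = v)).filter (fun a => a ∈ pathEdges p)).card := by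
    simp [outSum, chi, Finset.sum_boole]
  rw [this, key, List.card_toFinset,
    List.Nodup.dedup ((pathEdges_nodup hnd).filter _), count_tail hnd]
  split <;> norm_num

lemma inSum_chi {A : Finset (V × V)} {p : List V}
    (hc : p.Chain' (fun u v => (u, v) ∈ A)) (hnd : p.Nodup) (v : V) :
    inSum A (chi p) v = if v ∈ p.tail then 1 else 0 := by
  have hsub : ∀ a ∈ pathEdges p, a ∈ A := fun a ha => chain'_of_pathEdges hc ha
  have key : (A.filter (fun a => a.2 = v)).filter (fun a => a ∈ pathEdges p)
      = ((pathEdges p).filter (fun a => a.2 = v)).toFinset := by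
    ext a
    simp only [Finset.mem_filter, List.mem_toFinset, List.mem_filter, decide_eq_true_eq]
    constructor
    · rintro ⟨⟨_, h1⟩, h2⟩; exact ⟨h2, h1⟩
    · rintro ⟨h2, h1⟩; exact ⟨⟨hsub a h2, h1⟩, h2⟩
  have : inSum A (chi p) v
      = ((A.filter (fun a => a.2 = v)).filter (fun a => a ∈ pathEdges p)).card := by
    simp [inSum, chi, Finset.sum_boole]
  rw [this, key, List.card_toFinset,
    List.Nodup.dedup ((pathEdges_nodup hnd).filter _), count_head hnd]
  split <;> norm_num

-- sums for x supported on pathEdges p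
lemma outSum_supported {A : Finset (V × V)} {p : List V} {x : V × V → ℝ}
    (hc : p.Chain' (fun u v => (u, v) ∈ A)) (hnd : p.Nodup)
    (hsupp : ∀ a, a ∉ pathEdges p → x a = 0) {e : V × V} (he : e ∈ pathEdges p) :
    outSum A x e.1 = x e := by
  apply Finset.sum_eq_single_of_mem
  · simp [Finset.mem_filter, chain'_of_pathEdges hc he]
  · intro b hb hbe
    by_cases hbp : b ∈ pathEdges p
    · exfalso
      have hb1 : b.1 = e.1 := by simpa using (Finset.mem_filter.1 hb).2
      have : b ∈ (pathEdges p).filter (fun a => a.1 = e.1) := by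
        simp [List.mem_filter, hbp, hb1]
      rw [filter_tail_eq hnd he] at this
      simp at this
      exact hbe this
    · exact hsupp b hbp

lemma inSum_supported {A : Finset (V × V)} {p : List V} {x : V × V → ℝ}
    (hc : p.Chain' (fun u v => (u, v) ∈ A)) (hnd : p.Nodup)
    (hsupp : ∀ a, a ∉ pathEdges p → x a = 0) {e : V × V} (he : e ∈ pathEdges p) :
    inSum A x e.2 = x e := by
  apply Finset.sum_eq_single_of_mem
  · simp [Finset.mem_filter, chain'_of_pathEdges hc he]
  · intro b hb hbe
    by_cases hbp : b ∈ pathEdges p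
    · exfalso
      have hb2 : b.2 = e.2 := by simpa using (Finset.mem_filter.1 hb).2
      have : b ∈ (pathEdges p).filter (fun a => a.2 = e.2) := by
        simp [List.mem_filter, hbp, hb2]
      rw [filter_head_eq hnd he] at this
      simp at this
      exact hbe this
    · exact hsupp b hbp

lemma inSum_source_zero {A : Finset (V × V)} {p : List V} {x : V × V → ℝ} {s : V}
    (hhead : p.head? = some s) (hnd : p.Nodup)
    (hsupp : ∀ a, a ∉ pathEdges p → x a = 0) :
    inSum A x s = 0 := by
  apply Finset.sum_eq_zero
  intro a ha
  by_cases hap : a ∈ pathEdges p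
  · exfalso
    have h2 : a.2 ∈ p.tail := (mem_pathEdges hap).2
    have ha2 : a.2 = s := by simpa using (Finset.mem_filter.1 ha).2
    cases p with
    | nil => simp at hhead
    | cons u q =>
      have : u = s := by simpa using hhead
      subst this
      rw [ha2] at h2
      exact (List.nodup_cons.1 hnd).1 h2
  · exact hsupp a hap

-- structural facts about paths
lemma path_split {p : List V} {t : V} (hlast : p.getLast? = some t) :
    p.dropLast ++ [t] = p :=
  List.dropLast_append_getLast? t hlast

lemma t_not_mem_dropLast {p : List V} {t : V} (hlast : p.getLast? = some t)
    (hnd : p.Nodup) : t ∉ p.dropLast := by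
  have h := path_split hlast
  rw [← h] at hnd
  have := (List.nodup_append.1 hnd).2.2
  intro hmem
  exact this t hmem t (by simp) rfl

lemma mem_dropLast_iff {p : List V} {t v : V} (hlast : p.getLast? = some t)
    (hvt : v ≠ t) : v ∈ p.dropLast ↔ v ∈ p := by
  conv_rhs => rw [← path_split hlast]
  simp [hvt]

-- chi is a flow
lemma chi_isFlow {A : Finset (V × V)} {s t : V} {p : List V}
    (hp : IsPath A s t p) (hst : s ≠ t) : IsFlow A s t (chi p) := by
  obtain ⟨hc, hhead, hlast, hnd⟩ := hp
  cases p with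
  | nil => simp at hhead
  | cons u q =>
  have hu : s = u := by symm; simpa using hhead
  subst hu
  refine ⟨?_, ?_, ?_, ?_⟩
  · intro a ha
    by_cases h : a ∈ pathEdges (s :: q)
    · exact absurd (chain'_of_pathEdges hc h) ha
    · simp [chi, h]
  · intro a; unfold chi; split <;> norm_num
  · intro v hvs hvt
    rw [outSum_chi hc hnd, inSum_chi hc hnd]
    have h1 : v ∈ (s :: q).dropLast ↔ v ∈ s :: q := mem_dropLast_iff hlast hvt
    have h2 : v ∈ (s :: q).tail ↔ v ∈ s :: q := by simp [hvs]
    rw [if_congr (h1.trans h2.symm) rfl rfl]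
  · rw [outSum_chi hc hnd, inSum_chi hc hnd]
    have h1 : s ∈ (s :: q).dropLast := (mem_dropLast_iff hlast hst).2 (by simp)
    have h2 : s ∉ q := (List.nodup_cons.1 hnd).1
    simp [h1, h2]

-- if chi p is a flow then s ≠ t
lemma s_ne_t_of_path_flow {A : Finset (V × V)} {s t : V} {p : List V}
    (hp : IsPath A s t p) (hf : IsFlow A s t (chi p)) : s ≠ t := by
  intro hst
  subst hst
  obtain ⟨hc, hhead, hlast, hnd⟩ := hp
  cases p with
  | nil => simp at hhead
  | cons u q =>
  have hu : s = u := by symm; simpa using hhead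
  subst hu
  cases q with
  | nil =>
    have := hf.2.2.2
    simp [outSum, inSum, chi, pathEdges_singleton] at this
  | cons w r =>
    have h1 : (w :: r).getLast? = some s := by
      rw [← List.getLast?_cons_cons (a := s)]; exact hlast
    have h2 : s ∈ w :: r := List.mem_of_getLast? h1
    exact (List.nodup_cons.1 hnd).1 h2

-- a flow supported on the edges of a path equals chi of the path
lemma flow_supported_on_path {A : Finset (V × V)} {s t : V} {p : List V} {x : V × V → ℝ}
    (hp : IsPath A s t p) (hf : IsFlow A s t x)
    (hsupp : ∀ a, a ∉ pathEdges p → x a = 0) : x = chi p := by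
  obtain ⟨hc, hhead, hlast, hnd⟩ := hp
  obtain ⟨hzero, hnn, hcons, hval⟩ := hf
  have htd : t ∉ p.dropLast := t_not_mem_dropLast hlast hnd
  cases p with
  | nil => simp at hhead
  | cons u q =>
  have hu : s = u := by symm; simpa using hhead
  subst hu
  have hs_tail : s ∉ (s :: q).tail := by simpa using (List.nodup_cons.1 hnd).1
  have key : ∀ n (hn : n < (pathEdges (s :: q)).length), x ((pathEdges (s :: q))[n]) = 1 := by
    intro n
    induction n with
    | zero =>
      intro hn
      cases q with
      | nil => simp [pathEdges_singleton] at hn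
      | cons w r =>
        have he : ((s, w) : V × V) ∈ pathEdges (s :: w :: r) := by
          rw [pathEdges_cons_cons]; exact List.mem_cons_self
        have h1 : outSum A x s = x (s, w) :=
          outSum_supported hc hnd hsupp he
        have h2 : inSum A x s = 0 := inSum_source_zero (p := s :: w :: r) rfl hnd hsupp
        have h0 : (pathEdges (s :: w :: r))[0] = ((s, w) : V × V) := rfl
        rw [h0]
        rw [h1, h2] at hval
        linarith
    | succ m ih =>
      intro hn
      have hm : m < (pathEdges (s :: q)).length := by omega
      have he : (pathEdges (s :: q))[m] ∈ pathEdges (s :: q) := List.getElem_mem _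
      have hfm : (pathEdges (s :: q))[m+1] ∈ pathEdges (s :: q) := List.getElem_mem _
      have link : ((pathEdges (s :: q))[m+1]).1 = ((pathEdges (s :: q))[m]).2 := by
        have e1 := List.getElem_zip (l := s :: q) (l' := (s :: q).tail) (i := m+1) (h := hn)
        have e2 := List.getElem_zip (l := s :: q) (l' := (s :: q).tail) (i := m) (h := hm)
        show ((s :: q).zip (s :: q).tail)[m+1].1 = ((s :: q).zip (s :: q).tail)[m].2
        rw [e1, e2]
        simp
      set v := ((pathEdges (s :: q))[m]).2 with hv
      have hv_tail : v ∈ (s :: q).tail := (mem_pathEdges he).2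
      have hv_ne_s : v ≠ s := fun h => hs_tail (h ▸ hv_tail)
      have hv_dl : v ∈ (s :: q).dropLast := by rw [← link]; exact (mem_pathEdges hfm).1
      have hv_ne_t : v ≠ t := fun h => htd (h ▸ hv_dl)
      have h1 : inSum A x v = x ((pathEdges (s :: q))[m]) := inSum_supported hc hnd hsupp he
      have h2 : outSum A x v = x ((pathEdges (s :: q))[m+1]) := by
        rw [← link]; exact outSum_supported hc hnd hsupp hfm
      have h3 := hcons v hv_ne_s hv_ne_t
      rw [h1, h2, ih hm] at h3
      exact h3
  funext a
  by_cases hap : a ∈ pathEdges (s :: q)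
  · obtain ⟨i, hi, hia⟩ := List.getElem_of_mem hap
    rw [← hia, key i hi]
    simp only [chi, hia, if_pos hap]
  · rw [hsupp a hap]
    simp [chi, hap]

-- acyclicity consequences
lemma chain'_transGen {r : V → V → Prop} {u v : V} {l : List V}
    (hc : (u :: l).Chain' r) (hv : v ∈ l) : Relation.TransGen r u v := by
  induction l generalizing u with
  | nil => simp at hv
  | cons w m ih =>
    have h1 : r u w := (List.isChain_cons_cons.1 hc).1
    rcases List.mem_cons.1 hv with rfl | hv'
    · exact Relation.TransGen.single h1
    · exact Relation.TransGen.head h1 (ih (List.isChain_cons_cons.1 hc).2 hv')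

lemma chain'_nodup {A : Finset (V × V)} (hA : Acyclic A) {r : V → V → Prop}
    (himp : ∀ u w, r u w → (u, w) ∈ A) {l : List V} (hc : l.Chain' r) : l.Nodup := by
  induction l with
  | nil => simp
  | cons u m ih =>
    refine List.nodup_cons.2 ⟨?_, ih hc.tail⟩
    intro hu
    exact hA u (Relation.TransGen.mono himp _ _ (chain'_transGen hc hu))

lemma exists_path_to_t {A : Finset (V × V)} {s t : V} {x : V × V → ℝ}
    (hA : Acyclic A) (hf : IsFlow A s t x) :
    ∃ R, IsPath A s t R ∧ ∀ a ∈ pathEdges R, 0 < x a := by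
  obtain ⟨hzero, hnn, hcons, hval⟩ := hf
  have : IsIrrefl V (fun a b => Relation.TransGen (fun u w => (u, w) ∈ A) b a) :=
    ⟨fun v h => hA v h⟩
  have : IsTrans V (fun a b => Relation.TransGen (fun u w => (u, w) ∈ A) b a) :=
    ⟨fun a b c h1 h2 => h2.trans h1⟩
  have wf : WellFounded (fun a b : V => Relation.TransGen (fun u w => (u, w) ∈ A) b a) :=
    Finite.wellFounded_of_trans_of_irrefl _
  have main : ∀ v : V, 0 < outSum A x v →
      ∃ l : List V, (v :: l).Chain' (fun u w => (u, w) ∈ A ∧ 0 < x (u, w)) ∧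
        (v :: l).getLast? = some t := by
    intro v
    induction v using WellFounded.induction wf with
    | _ v IH =>
    intro hv
    obtain ⟨a, ha, hxa⟩ : ∃ a ∈ A.filter (fun a => a.1 = v), 0 < x a := by
      by_contra h
      push_neg at h
      have : outSum A x v ≤ 0 := Finset.sum_nonpos fun a ha => h a ha
      linarith
    have haA : a ∈ A := (Finset.mem_filter.1 ha).1
    have ha1 : a.1 = v := (Finset.mem_filter.1 ha).2
    have havw : a = (v, a.2) := by rw [← ha1]
    by_cases hw : a.2 = t
    · refine ⟨[a.2], ?_, by simp [hw]⟩
      refine List.isChain_cons_cons.2 ⟨⟨?_, ?_⟩, List.isChain_singleton _⟩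
      · rw [← havw]; exact haA
      · rw [← havw]; exact hxa
    · have hw_out : 0 < outSum A x a.2 := by
        by_cases hws : a.2 = s
        · have h1 : 0 ≤ inSum A x s := inSum_nonneg A hnn s
          rw [hws]; linarith
        · have h1 : outSum A x a.2 = inSum A x a.2 := hcons a.2 hws hw
          have h2 : x a ≤ inSum A x a.2 := by
            apply Finset.single_le_sum (fun b _ => hnn b)
            simp [Finset.mem_filter, haA]
          linarith
      obtain ⟨l, hchain, hlast⟩ := IH a.2
        (Relation.TransGen.single (show (v, a.2) ∈ A from havw ▸ haA)) hw_out
      refine ⟨a.2 :: l, ?_, ?_⟩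
      · refine List.isChain_cons_cons.2 ⟨⟨?_, ?_⟩, hchain⟩
        · rw [← havw]; exact haA
        · rw [← havw]; exact hxa
      · rw [List.getLast?_cons_cons]; exact hlast
  have hs : 0 < outSum A x s := by
    have := inSum_nonneg A hnn s
    linarith
  obtain ⟨l, hchain, hlast⟩ := main s hs
  refine ⟨s :: l, ⟨hchain.imp fun _ _ h => h.1, rfl, hlast,
    chain'_nodup hA (fun u w h => h.1) hchain⟩, ?_⟩
  intro a ha
  exact (chain'_of_pathEdges hchain ha).2

-- scaling / sums of flows
lemma outSum_const_mul (A : Finset (V × V)) (c : ℝ) (g : V × V → ℝ) (v : V) :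
    outSum A (fun a => c * g a) v = c * outSum A g v := by
  simp [outSum, Finset.mul_sum]

lemma inSum_const_mul (A : Finset (V × V)) (c : ℝ) (g : V × V → ℝ) (v : V) :
    inSum A (fun a => c * g a) v = c * inSum A g v := by
  simp [inSum, Finset.mul_sum]

lemma outSum_fin_sum (A : Finset (V × V)) {k : ℕ} (f : Fin k → (V × V) → ℝ) (v : V) :
    outSum A (fun a => ∑ i, f i a) v = ∑ i, outSum A (f i) v := by
  simp [outSum]
  rw [Finset.sum_comm]

lemma inSum_fin_sum (A : Finset (V × V)) {k : ℕ} (f : Fin k → (V × V) → ℝ) (v : V) :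
    inSum A (fun a => ∑ i, f i a) v = ∑ i, inSum A (f i) v := by
  simp [inSum]
  rw [Finset.sum_comm]

-- centroid of flows is a flow
lemma centroid_isFlow {A : Finset (V × V)} {s t : V} {k : ℕ} (hk : 0 < k)
    {f : Fin k → (V × V) → ℝ} (hf : ∀ i, IsFlow A s t (f i)) :
    IsFlow A s t (fun a => (1 / k) * ∑ i, f i a) := by
  have hkR : (0 : ℝ) < k := by exact_mod_cast hk
  refine ⟨?_, ?_, ?_, ?_⟩
  · intro a ha
    have : ∀ i, f i a = 0 := fun i => (hf i).1 a ha
    simp [this]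
  · intro a
    have h : ∀ i, 0 ≤ f i a := fun i => (hf i).2.1 a
    exact mul_nonneg (by positivity) (Finset.sum_nonneg fun i _ => h i)
  · intro v hvs hvt
    rw [outSum_const_mul, inSum_const_mul, outSum_fin_sum, inSum_fin_sum]
    congr 1
    exact Finset.sum_congr rfl fun i _ => (hf i).2.2.1 v hvs hvt
  · rw [outSum_const_mul, inSum_const_mul, outSum_fin_sum, inSum_fin_sum]
    have : ∀ i ∈ Finset.univ (α := Fin k),
        outSum A (f i) s = inSum A (f i) s + 1 := by
      intro i _
      have := (hf i).2.2.2
      linarith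
    rw [Finset.sum_congr rfl this, Finset.sum_add_distrib]
    simp
    field_simp
    ring

-- perturbation: peel off a path with positive flow on its edges
lemma decompose_along_path {A : Finset (V × V)} {s t : V} {R : List V} {x : V × V → ℝ}
    (hx : IsFlow A s t x) (hR : IsPath A s t R) (hst : s ≠ t)
    (hpos : ∀ a ∈ pathEdges R, 0 < x a) :
    ∃ (ε : ℝ) (y : V × V → ℝ), 0 < ε ∧ ε < 1 ∧ IsFlow A s t y ∧
      x = fun a => ε * chi R a + (1 - ε) * y a := by
  have hene : (pathEdges R).toFinset.Nonempty := by
    obtain ⟨hc, hhead, hlast, hnd⟩ := hR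
    cases R with
    | nil => simp at hhead
    | cons u q =>
      have hu : s = u := by symm; simpa using hhead
      subst hu
      cases q with
      | nil =>
        exfalso; exact hst (by simpa using hlast)
      | cons w r =>
        exact ⟨(s, w), by simp [pathEdges_cons_cons]⟩
  set S := (pathEdges R).toFinset with hS
  set m := Finset.min' (S.image x) (hene.image x) with hm
  have hm_mem : m ∈ S.image x := Finset.min'_mem _ _
  have hm_pos : 0 < m := by
    obtain ⟨a, haS, hax⟩ := Finset.mem_image.1 hm_mem
    rw [← hax]
    exact hpos a (List.mem_toFinset.1 haS)
  have hm_le : ∀ a ∈ pathEdges R, m ≤ x a := by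
    intro a ha
    exact Finset.min'_le _ _ (Finset.mem_image_of_mem x (List.mem_toFinset.2 ha))
  set ε := min m (1/2 : ℝ) with hε
  have hε_pos : 0 < ε := lt_min hm_pos (by norm_num)
  have hε_lt : ε < 1 := lt_of_le_of_lt (min_le_right _ _) (by norm_num)
  have h1ε : (0:ℝ) < 1 - ε := by linarith
  set y : (V × V) → ℝ := fun a => (1 / (1 - ε)) * x a + (-ε / (1 - ε)) * chi R a with hy
  have hchiflow := chi_isFlow hR hst
  refine ⟨ε, y, hε_pos, hε_lt, ⟨?_, ?_, ?_, ?_⟩, ?_⟩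
  · intro a ha
    rw [hy]
    simp [hx.1 a ha, hchiflow.1 a ha]
  · intro a
    show 0 ≤ 1 / (1 - ε) * x a + -ε / (1 - ε) * chi R a
    by_cases hmem : a ∈ pathEdges R
    · have h1 : chi R a = 1 := by simp [chi, hmem]
      have h2 : ε ≤ x a := le_trans (min_le_left _ _) (hm_le a hmem)
      rw [h1]
      have heq : 1 / (1 - ε) * x a + -ε / (1 - ε) * 1 = (x a - ε) / (1 - ε) := by
        field_simp
        ring
      rw [heq]
      apply div_nonneg <;> linarith
    · have h1 : chi R a = 0 := by simp [chi, hmem]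
      rw [h1]
      have h2 := hx.2.1 a
      have h3 : 0 ≤ 1 / (1 - ε) := by positivity
      nlinarith
  · intro v hvs hvt
    rw [hy, outSum_comb, inSum_comb, hx.2.2.1 v hvs hvt, hchiflow.2.2.1 v hvs hvt]
  · rw [hy, outSum_comb, inSum_comb]
    have e1 := hx.2.2.2
    have e2 := hchiflow.2.2.2
    have e3 : outSum A x s = inSum A x s + 1 := by linarith
    have e4 : outSum A (chi R) s = inSum A (chi R) s + 1 := by linarith
    rw [e3, e4]
    field_simp
    ring
  · funext a
    show x a = ε * chi R a + (1 - ε) * (1 / (1 - ε) * x a + -ε / (1 - ε) * chi R a)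
    field_simp
    ring

/-- The vertices of the smallest face of the flow polytope containing the vertices
`χ^{P₁}, …, χ^{P_k}` are exactly the vertices `χ^R` for `s`–`t` paths `R` with
`R ⊆ P₁ ∪ ⋯ ∪ P_k` (as arc sets). -/
theorem stmt6 (A : Finset (V × V)) (s t : V) (hA : Acyclic A)
    (k : ℕ) (hk : 1 ≤ k) (P : Fin k → List V) (hP : ∀ i, IsPath A s t (P i))
    (F : Set ((V × V) → ℝ))
    (hFface : IsExposed ℝ (flowPolytope A s t) F)
    (hFmem : ∀ i, chi (P i) ∈ F)
    (hFmin : ∀ G, IsExposed ℝ (flowPolytope A s t) G → (∀ i, chi (P i) ∈ G) → F ⊆ G) :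
    Set.extremePoints ℝ F
      = {x | ∃ R : List V, IsPath A s t R ∧
          (∀ a ∈ pathEdges R, ∃ i, a ∈ pathEdges (P i)) ∧ x = chi R} := by
  classical
  have hkpos : 0 < k := hk
  set i0 : Fin k := ⟨0, hk⟩ with hi0
  have hext := hFface.isExtreme
  have hFC : F ⊆ flowPolytope A s t := hext.1
  have hχ0 : chi (P i0) ∈ F := hFmem i0
  have hFne : F.Nonempty := ⟨_, hχ0⟩
  obtain ⟨l, hl⟩ := hFface hFne
  have hflow0 : IsFlow A s t (chi (P i0)) := hFC hχ0
  have hst : s ≠ t := s_ne_t_of_path_flow (hP i0) hflow0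
  -- the support face G
  set S : Finset (V × V) := A.filter (fun a => ¬ ∃ i, a ∈ pathEdges (P i)) with hSdef
  have hchiS : ∀ i, ∀ a ∈ S, chi (P i) a = 0 := by
    intro i a ha
    have hnex := (Finset.mem_filter.1 ha).2
    have : a ∉ pathEdges (P i) := fun h => hnex ⟨i, h⟩
    simp [chi, this]
  set G : Set ((V × V) → ℝ) := {x ∈ flowPolytope A s t | ∀ a ∈ S, x a = 0} with hGdef
  have hGexp : IsExposed ℝ (flowPolytope A s t) G := by
    intro _
    refine ⟨-∑ a ∈ S, ContinuousLinearMap.proj a, ?_⟩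
    have hLapp : ∀ x : (V × V) → ℝ,
        (-∑ a ∈ S, ContinuousLinearMap.proj (R := ℝ) (φ := fun _ : V × V => ℝ) a) x
          = -∑ a ∈ S, x a := by
      intro x
      simp
    ext x
    constructor
    · rintro ⟨hxC, hxz⟩
      refine ⟨hxC, fun y hyC => ?_⟩
      rw [hLapp, hLapp, Finset.sum_eq_zero hxz]
      have : 0 ≤ ∑ a ∈ S, y a := Finset.sum_nonneg fun a _ => hyC.2.1 a
      linarith
    · rintro ⟨hxC, hmax⟩
      refine ⟨hxC, ?_⟩
      have h3 := hmax _ (hFC hχ0)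
      rw [hLapp, hLapp, Finset.sum_eq_zero (hchiS i0)] at h3
      have h4 : ∀ a ∈ S, 0 ≤ x a := fun a _ => hxC.2.1 a
      have h6 : ∑ a ∈ S, x a = 0 := le_antisymm (by linarith) (Finset.sum_nonneg h4)
      exact fun a ha => (Finset.sum_eq_zero_iff_of_nonneg h4).1 h6 a ha
  have hFG : F ⊆ G := hFmin G hGexp fun i => ⟨hFC (hFmem i), hchiS i⟩
  -- chi R belongs to F whenever R is a path inside the union of the P i
  have hmemF : ∀ R : List V, IsPath A s t R →
      (∀ a ∈ pathEdges R, ∃ i, a ∈ pathEdges (P i)) → chi R ∈ F := by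
    intro R hR hRU
    have hchiR : IsFlow A s t (chi R) := chi_isFlow hR hst
    set xb : (V × V) → ℝ := fun a => (1 / k) * ∑ i, chi (P i) a with hxb
    have hxbflow : IsFlow A s t xb :=
      centroid_isFlow hkpos (fun i => chi_isFlow (hP i) hst)
    have hxbF : xb ∈ F := by
      rw [hl]
      refine ⟨hxbflow, fun y hy => ?_⟩
      have hsm : xb = (1 / (k : ℝ)) • ∑ i, chi (P i) := by
        funext a
        simp [hxb, Finset.sum_apply]
      have hlin : l xb = (1 / (k : ℝ)) * ∑ i, l (chi (P i)) := by
        rw [hsm, map_smul, map_sum]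
        simp
      have hge : ∀ i : Fin k, l y ≤ l (chi (P i)) := by
        intro i
        have := hFmem i
        rw [hl] at this
        exact this.2 y hy
      have hsum : (k : ℝ) * l y ≤ ∑ i, l (chi (P i)) := by
        calc (k : ℝ) * l y = ∑ _i : Fin k, l y := by
              simp [Finset.sum_const, mul_comm]
        _ ≤ ∑ i, l (chi (P i)) := Finset.sum_le_sum fun i _ => hge i
      rw [hlin]
      have hkne : (k : ℝ) ≠ 0 := by positivity
      rw [div_mul_eq_mul_div, one_mul, le_div_iff₀ (by positivity)]
      linarith
    have hxbpos : ∀ a ∈ pathEdges R, 0 < xb a := by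
      intro a ha
      obtain ⟨i, hi⟩ := hRU a ha
      have h1 : (1 : ℝ) ≤ ∑ j, chi (P j) a := by
        have h2 : chi (P i) a = 1 := by simp [chi, hi]
        calc (1 : ℝ) = chi (P i) a := h2.symm
        _ ≤ ∑ j, chi (P j) a := Finset.single_le_sum (f := fun j => chi (P j) a)
            (fun j _ => by simp only [chi]; split <;> norm_num) (Finset.mem_univ i)
      have : (0:ℝ) < 1 / k := by positivity
      rw [hxb]
      nlinarith
    obtain ⟨ε, y, hε0, hε1, hyflow, hdecomp⟩ :=
      decompose_along_path hxbflow hR hst hxbpos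
    have hseg : xb ∈ openSegment ℝ (chi R) y := by
      refine ⟨ε, 1 - ε, hε0, by linarith, by ring, ?_⟩
      funext a
      have := congrFun hdecomp a
      simp only [Pi.add_apply, Pi.smul_apply, smul_eq_mul]
      rw [this]
    exact hext.2 hchiR hyflow hxbF hseg
  ext x
  simp only [Set.mem_setOf_eq]
  rw [mem_extremePoints]
  constructor
  · rintro ⟨hxF, hxext⟩
    have hxC : IsFlow A s t x := hFC hxF
    obtain ⟨R, hR, hRpos⟩ := exists_path_to_t hA hxC
    obtain ⟨ε, y, hε0, hε1, hyflow, hdecomp⟩ :=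
      decompose_along_path hxC hR hst hRpos
    have hchiR : IsFlow A s t (chi R) := chi_isFlow hR hst
    have hseg : x ∈ openSegment ℝ (chi R) y := by
      refine ⟨ε, 1 - ε, hε0, by linarith, by ring, ?_⟩
      funext a
      have := congrFun hdecomp a
      simp only [Pi.add_apply, Pi.smul_apply, smul_eq_mul]
      rw [this]
    have hfaces := And.intro (hext.2 hchiR hyflow hxF hseg)
      (hext.right_mem_of_mem_openSegment hchiR hyflow hxF hseg)
    have hfin := hxext (chi R) hfaces.1 y hfaces.2 hseg
    refine ⟨R, hR, ?_, hfin.1.symm⟩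
    intro a ha
    by_contra hnex
    have haA : a ∈ A := chain'_of_pathEdges hR.1 ha
    have haS : a ∈ S := Finset.mem_filter.2 ⟨haA, hnex⟩
    have hz := (hFG hxF).2 a haS
    exact (hRpos a ha).ne' hz
  · rintro ⟨R, hR, hRU, rfl⟩
    refine ⟨hmemF R hR hRU, ?_⟩
    intro x1 hx1 x2 hx2 hseg
    obtain ⟨c, d, hc, hd, hcd, hsum⟩ := hseg
    have hx1C : IsFlow A s t x1 := hFC hx1
    have hx2C : IsFlow A s t x2 := hFC hx2
    have hsupp : ∀ (c' d' : ℝ), 0 < c' → 0 < d' →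
        ∀ (z w : (V × V) → ℝ), IsFlow A s t z → IsFlow A s t w →
        (∀ a, c' * z a + d' * w a = chi R a) → ∀ a, a ∉ pathEdges R → z a = 0 := by
      intro c' d' hc hd z w hz hw hsum a ha
      have h0 : chi R a = 0 := by simp [chi, ha]
      have h1 := hsum a
      rw [h0] at h1
      have h2 := hz.2.1 a
      have h3 := hw.2.1 a
      nlinarith
    have hsum' : ∀ a, c * x1 a + d * x2 a = chi R a := by
      intro a
      have := congrFun hsum a
      simpa using this
    have hsum'' : ∀ a, d * x2 a + c * x1 a = chi R a := by
      intro a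
      have := hsum' a
      linarith
    constructor
    · exact flow_supported_on_path hR hx1C (hsupp c d hc hd x1 x2 hx1C hx2C hsum')
    · exact flow_supported_on_path hR hx2C (hsupp d c hd hc x2 x1 hx2C hx1C hsum'')
end

section
/- If P and Q are s–t paths in an acyclic network whose vertices χ^P and χ^Q are nonadjacent in the flow polytope F(D), then there exist two other s–t paths R and S with (χ^P + χ^Q)/2 = (χ^R + χ^S)/2 and {χ^R, χ^S} ≠ {χ^P, χ^Q}. In particular, F(D) is a combinatorial polytope in the sense of Naddef and Pulleyblank. -/
open scoped Classical

variable {V : Type*} [Fintype V] [DecidableEq V]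

/-- Two vertices of a polytope `S` are adjacent when the segment joining them is a
(one-dimensional) face of `S`, i.e. an exposed face. -/
def AdjacentVerts (S : Set ((V × V) → ℝ)) (x y : (V × V) → ℝ) : Prop :=
  x ≠ y ∧ IsExposed ℝ S (segment ℝ x y)

/-- A facet: a proper maximal (exposed) face. -/
def IsFacetOf (S F : Set ((V × V) → ℝ)) : Prop :=
  IsExposed ℝ S F ∧ F ≠ S ∧ ∀ G, IsExposed ℝ S G → G ≠ S → F ⊆ G → G = F

set_option linter.unusedSectionVars false
set_option maxHeartbeats 1000000



lemma pathEdges_single (a : V) : pathEdges [a] = [] := rfl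
lemma pathEdges_cons₂ (a b : V) (l : List V) :
    pathEdges (a :: b :: l) = (a, b) :: pathEdges (b :: l) := rfl

lemma pathEdges_append (v : V) : ∀ (l₁ l₂ : List V),
    pathEdges (l₁ ++ v :: l₂) = pathEdges (l₁ ++ [v]) ++ pathEdges (v :: l₂)
  | [], l₂ => by simp [pathEdges_single]
  | [a], l₂ => by simp [pathEdges_cons₂, pathEdges_single]
  | a :: b :: l₁, l₂ => by
    have := pathEdges_append v (b :: l₁) l₂
    simpa [List.cons_append, pathEdges_cons₂] using congrArg (List.cons (a,b)) this

lemma fst_mem_dropLast : ∀ {l : List V} {e : V × V}, e ∈ pathEdges l → e.1 ∈ l.dropLast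
  | a :: b :: l, e, h => by
    rw [pathEdges_cons₂] at h
    rcases List.mem_cons.1 h with h | h
    · subst h; simp
    · have := fst_mem_dropLast h
      simp only [List.dropLast_cons₂] at *
      exact List.mem_cons_of_mem _ this

lemma snd_mem_tail : ∀ {l : List V} {e : V × V}, e ∈ pathEdges l → e.2 ∈ l.tail
  | a :: b :: l, e, h => by
    rw [pathEdges_cons₂] at h
    rcases List.mem_cons.1 h with h | h
    · subst h; simp
    · have h2 : e.2 ∈ l := snd_mem_tail h
      exact List.mem_cons_of_mem _ h2

lemma fst_mem_of_mem_pathEdges {l : List V} {e : V × V} (h : e ∈ pathEdges l) : e.1 ∈ l :=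
  List.dropLast_subset _ (fst_mem_dropLast h)

lemma snd_mem_of_mem_pathEdges {l : List V} {e : V × V} (h : e ∈ pathEdges l) : e.2 ∈ l :=
  List.tail_subset _ (snd_mem_tail h)

lemma pathEdges_chain {R : V → V → Prop} :
    ∀ {l : List V}, l.Chain' R → ∀ {e : V × V}, e ∈ pathEdges l → R e.1 e.2
  | a :: b :: l, hc, e, h => by
    rw [pathEdges_cons₂] at h
    rcases List.mem_cons.1 h with h | h
    · subst h; exact (List.isChain_cons_cons.1 hc).1
    · exact pathEdges_chain (List.isChain_cons_cons.1 hc).2 h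

/-- uniqueness of the out-arc at a node, in a nodup path -/
lemma snd_unique : ∀ {l : List V}, l.Nodup → ∀ {c x y : V},
    (c, x) ∈ pathEdges l → (c, y) ∈ pathEdges l → x = y
  | a :: b :: l, hn, c, x, y, hx, hy => by
    rw [pathEdges_cons₂] at hx hy
    rcases List.mem_cons.1 hx with hx | hx <;> rcases List.mem_cons.1 hy with hy | hy
    · injection hx with h1 h2; injection hy with h3 h4; rw [h2, h4]
    · exfalso
      injection hx with h1 h2
      have hm : c ∈ b :: l := fst_mem_of_mem_pathEdges hy
      rw [h1] at hm
      exact (List.nodup_cons.1 hn).1 hm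
    · exfalso
      injection hy with h1 h2
      have hm : c ∈ b :: l := fst_mem_of_mem_pathEdges hx
      rw [h1] at hm
      exact (List.nodup_cons.1 hn).1 hm
    · exact snd_unique (List.nodup_cons.1 hn).2 hx hy

lemma fst_unique : ∀ {l : List V}, l.Nodup → ∀ {c x y : V},
    (x, c) ∈ pathEdges l → (y, c) ∈ pathEdges l → x = y
  | a :: b :: l, hn, c, x, y, hx, hy => by
    rw [pathEdges_cons₂] at hx hy
    rcases List.mem_cons.1 hx with hx | hx <;> rcases List.mem_cons.1 hy with hy | hy
    · injection hx with h1 h2; injection hy with h3 h4; rw [h1, h3]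
    · exfalso
      injection hx with h1 h2
      have hm : c ∈ l := snd_mem_tail hy
      rw [h2] at hm
      exact (List.nodup_cons.1 (List.nodup_cons.1 hn).2).1 hm
    · exfalso
      injection hy with h1 h2
      have hm : c ∈ l := snd_mem_tail hx
      rw [h2] at hm
      exact (List.nodup_cons.1 (List.nodup_cons.1 hn).2).1 hm
    · exact fst_unique (List.nodup_cons.1 hn).2 hx hy

lemma pathEdges_mem_adj (c d : V) : ∀ (l₁ l₂ : List V), (c, d) ∈ pathEdges (l₁ ++ c :: d :: l₂)
  | [], l₂ => by rw [List.nil_append, pathEdges_cons₂]; exact List.mem_cons_self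
  | a :: l₁, l₂ => by
    cases l₁ with
    | nil => rw [List.cons_append, List.nil_append, pathEdges_cons₂]
             exact List.mem_cons_of_mem _ (pathEdges_mem_adj c d [] l₂)
    | cons b l₁ =>
      have := pathEdges_mem_adj c d (b :: l₁) l₂
      simp only [List.cons_append] at this ⊢
      rw [pathEdges_cons₂]
      exact List.mem_cons_of_mem _ this

lemma chain_transGen {R : V → V → Prop} :
    ∀ {a : V} {l : List V}, List.Chain R a l → ∀ {b}, b ∈ l → Relation.TransGen R a b
  | a, c :: l, hc, b, hb => by
    have hc := List.isChain_cons_cons.1 hc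
    rcases List.mem_cons.1 hb with hb | hb
    · subst hb; exact Relation.TransGen.single hc.1
    · exact Relation.TransGen.head hc.1 (chain_transGen hc.2 hb)

lemma transGen_of_mem_left {R : V → V → Prop} {l l₁ l₂ : List V} {v x : V}
    (hc : l.Chain' R) (hl : l = l₁ ++ v :: l₂) (hx : x ∈ l₁) :
    Relation.TransGen R x v := by
  subst hl
  obtain ⟨u₁, u₂, rfl⟩ := List.append_of_mem hx
  have hs : ((x :: (u₂ ++ v :: l₂))).Chain' R := by
    have : (x :: (u₂ ++ v :: l₂)) <:+ (u₁ ++ x :: u₂) ++ v :: l₂ := by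
      refine ⟨u₁, by simp⟩
    exact hc.suffix this
  have hc2 : List.Chain R x (u₂ ++ v :: l₂) := hs
  exact chain_transGen hc2 (by simp)

lemma transGen_of_mem_right {R : V → V → Prop} {l l₁ l₂ : List V} {v x : V}
    (hc : l.Chain' R) (hl : l = l₁ ++ v :: l₂) (hx : x ∈ l₂) :
    Relation.TransGen R v x := by
  subst hl
  have hs : ((v :: l₂)).Chain' R := hc.suffix ⟨l₁, rfl⟩
  have hc2 : List.Chain R v l₂ := hs
  exact chain_transGen hc2 hx

lemma eq_of_append_cons (v : V) : ∀ (l₁ m₁ l₂ m₂ : List V), (l₁ ++ v :: l₂).Nodup →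
    l₁ ++ v :: l₂ = m₁ ++ v :: m₂ → l₁ = m₁ ∧ l₂ = m₂
  | [], [], l₂, m₂, hn, he => by simp at he; exact ⟨rfl, he⟩
  | [], a :: m₁, l₂, m₂, hn, he => by
    exfalso
    simp only [List.nil_append, List.cons_append, List.cons.injEq] at he
    obtain ⟨rfl, he⟩ := he
    have : v ∈ l₂ := he ▸ (by simp)
    exact (List.nodup_cons.1 hn).1 this
  | a :: l₁, [], l₂, m₂, hn, he => by
    exfalso
    simp only [List.nil_append, List.cons_append, List.cons.injEq] at he
    obtain ⟨rfl, he⟩ := he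
    rw [List.cons_append] at hn
    exact (List.nodup_cons.1 hn).1 (by simp)
  | a :: l₁, b :: m₁, l₂, m₂, hn, he => by
    simp only [List.cons_append, List.cons.injEq] at he
    obtain ⟨rfl, he⟩ := he
    obtain ⟨h1, h2⟩ := eq_of_append_cons v l₁ m₁ l₂ m₂ (List.nodup_cons.1 (by simpa using hn)).2 he
    exact ⟨by rw [h1], h2⟩

lemma not_prefix_of_getLast {L₁ L₂ : List V} (h₁ : L₁ ≠ L₂) (hn : L₂.Nodup) (h2 : L₁ ≠ [])
    (hl : L₁.getLast? = L₂.getLast?) : ¬ L₁ <+: L₂ := by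
  rintro ⟨u, rfl⟩
  have hu : u ≠ [] := by rintro rfl; simp at h₁
  have hg : L₁.getLast? = u.getLast? := by rw [hl, List.getLast?_append_of_ne_nil _ hu]
  have hgl : L₁.getLast h2 ∈ u := by
    rw [List.getLast?_eq_getLast_of_ne_nil h2] at hg
    have : L₁.getLast h2 ∈ u.getLast? := hg ▸ rfl
    obtain ⟨hu2, hx⟩ := List.mem_getLast?_eq_getLast this
    rw [hx]
    exact List.getLast_mem hu2
  have hmem : L₁.getLast h2 ∈ L₁ := List.getLast_mem h2
  rw [List.nodup_append'] at hn
  exact hn.2.2 hmem hgl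

lemma first_diff : ∀ (L₁ L₂ : List V), L₁.head? = L₂.head? → L₁ ≠ L₂ →
    ¬ L₁ <+: L₂ → ¬ L₂ <+: L₁ →
    ∃ (C : List V) (c x y : V) (T₁ T₂ : List V),
      L₁ = C ++ c :: x :: T₁ ∧ L₂ = C ++ c :: y :: T₂ ∧ x ≠ y
  | [], L₂, hh, hne, hp₁, hp₂ => absurd (List.nil_prefix) hp₁
  | a :: T, [], hh, hne, hp₁, hp₂ => absurd (List.nil_prefix) hp₂
  | a :: T, a' :: T', hh, hne, hp₁, hp₂ => by
    have ha : a = a' := by simpa using hh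
    subst ha
    match hT : T, hT' : T' with
    | [], _ => exact absurd (by simpa using List.nil_prefix (l := T')) hp₁
    | b :: T, [] => exact absurd (by simp) hp₂
    | b :: T, b' :: T' =>
      by_cases hbb : b = b'
      · subst hbb
        have hne' : b :: T ≠ b :: T' := fun h => hne (by rw [h])
        have hp₁' : ¬ (b :: T) <+: (b :: T') := fun h => hp₁ (by
          exact List.cons_prefix_cons.2 ⟨rfl, h⟩)
        have hp₂' : ¬ (b :: T') <+: (b :: T) := fun h => hp₂ (by
          exact List.cons_prefix_cons.2 ⟨rfl, h⟩)
        obtain ⟨C, c, x, y, U₁, U₂, h1, h2, hxy⟩ :=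
          first_diff (b :: T) (b :: T') rfl hne' hp₁' hp₂'
        exact ⟨a :: C, c, x, y, U₁, U₂, by rw [List.cons_append, h1], by rw [List.cons_append, h2], hxy⟩
      · exact ⟨[], a, b, b', T, T', rfl, rfl, hbb⟩

section FlowLemmas
variable {A : Finset (V × V)} {x : V × V → ℝ}

lemma outSum_eq_single {u : V} {e : V × V} (he : e ∈ A) (h1 : e.1 = u)
    (hu : ∀ a, x a ≠ 0 → a.1 = u → a = e) : outSum A x u = x e := by
  unfold outSum
  refine Finset.sum_eq_single_of_mem e (Finset.mem_filter.2 ⟨he, h1⟩) ?_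
  intro b hb hbe
  by_contra h
  exact hbe (hu b h (Finset.mem_filter.1 hb).2)

lemma outSum_eq_zero {u : V} (hu : ∀ a, x a ≠ 0 → a.1 ≠ u) : outSum A x u = 0 := by
  unfold outSum
  refine Finset.sum_eq_zero fun b hb => ?_
  by_contra h
  exact hu b h (Finset.mem_filter.1 hb).2

lemma outSum_eq_pair {u : V} {e f : V × V} (he : e ∈ A) (h1 : e.1 = u) (hf : f ∈ A)
    (h2 : f.1 = u) (hef : e ≠ f) (hu : ∀ a, x a ≠ 0 → a.1 = u → a = e ∨ a = f) :
    outSum A x u = x e + x f := by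
  unfold outSum
  rw [← Finset.sum_pair hef]
  refine (Finset.sum_subset ?_ ?_).symm
  · intro a ha
    rcases Finset.mem_insert.1 ha with rfl | ha
    · exact Finset.mem_filter.2 ⟨he, h1⟩
    · rw [Finset.mem_singleton.1 ha]; exact Finset.mem_filter.2 ⟨hf, h2⟩
  · intro a ha hna
    by_contra h
    rcases hu a h (Finset.mem_filter.1 ha).2 with rfl | rfl
    · exact hna (Finset.mem_insert_self _ _)
    · exact hna (Finset.mem_insert_of_mem (Finset.mem_singleton_self _))

lemma inSum_eq_single {u : V} {e : V × V} (he : e ∈ A) (h1 : e.2 = u)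
    (hu : ∀ a, x a ≠ 0 → a.2 = u → a = e) : inSum A x u = x e := by
  unfold inSum
  refine Finset.sum_eq_single_of_mem e (Finset.mem_filter.2 ⟨he, h1⟩) ?_
  intro b hb hbe
  by_contra h
  exact hbe (hu b h (Finset.mem_filter.1 hb).2)

lemma inSum_eq_zero {u : V} (hu : ∀ a, x a ≠ 0 → a.2 ≠ u) : inSum A x u = 0 := by
  unfold inSum
  refine Finset.sum_eq_zero fun b hb => ?_
  by_contra h
  exact hu b h (Finset.mem_filter.1 hb).2

lemma inSum_eq_pair {u : V} {e f : V × V} (he : e ∈ A) (h1 : e.2 = u) (hf : f ∈ A)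
    (h2 : f.2 = u) (hef : e ≠ f) (hu : ∀ a, x a ≠ 0 → a.2 = u → a = e ∨ a = f) :
    inSum A x u = x e + x f := by
  unfold inSum
  rw [← Finset.sum_pair hef]
  refine (Finset.sum_subset ?_ ?_).symm
  · intro a ha
    rcases Finset.mem_insert.1 ha with rfl | ha
    · exact Finset.mem_filter.2 ⟨he, h1⟩
    · rw [Finset.mem_singleton.1 ha]; exact Finset.mem_filter.2 ⟨hf, h2⟩
  · intro a ha hna
    by_contra h
    rcases hu a h (Finset.mem_filter.1 ha).2 with rfl | rfl
    · exact hna (Finset.mem_insert_self _ _)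
    · exact hna (Finset.mem_insert_of_mem (Finset.mem_singleton_self _))

lemma outSum_combo {y : V × V → ℝ} {a b : ℝ} (v : V) :
    outSum A (a • x + b • y) v = a * outSum A x v + b * outSum A y v := by
  unfold outSum
  rw [Finset.mul_sum, Finset.mul_sum, ← Finset.sum_add_distrib]
  simp [mul_comm]

lemma inSum_combo {y : V × V → ℝ} {a b : ℝ} (v : V) :
    inSum A (a • x + b • y) v = a * inSum A x v + b * inSum A y v := by
  unfold inSum
  rw [Finset.mul_sum, Finset.mul_sum, ← Finset.sum_add_distrib]
  simp [mul_comm]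

end FlowLemmas

lemma outSum_sub {A : Finset (V × V)} {x y : V × V → ℝ} (v : V) :
    outSum A (x - y) v = outSum A x v - outSum A y v := by
  unfold outSum
  rw [← Finset.sum_sub_distrib]
  rfl

lemma inSum_sub {A : Finset (V × V)} {x y : V × V → ℝ} (v : V) :
    inSum A (x - y) v = inSum A x v - inSum A y v := by
  unfold inSum
  rw [← Finset.sum_sub_distrib]
  rfl

lemma pathEdges_pair (a b : V) : pathEdges [a, b] = [(a, b)] := rfl

lemma isFlow_combo {A : Finset (V × V)} {s t : V} {x y : V × V → ℝ} {a b : ℝ}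
    (hx : IsFlow A s t x) (hy : IsFlow A s t y) (ha : 0 ≤ a) (hb : 0 ≤ b) (hab : a + b = 1) :
    IsFlow A s t (a • x + b • y) := by
  obtain ⟨hx0, hx1, hx2, hx3⟩ := hx
  obtain ⟨hy0, hy1, hy2, hy3⟩ := hy
  refine ⟨fun e he => by simp [hx0 e he, hy0 e he], fun e => ?_, fun v hv1 hv2 => ?_, ?_⟩
  · have := hx1 e; have := hy1 e
    simp only [Pi.add_apply, Pi.smul_apply, smul_eq_mul]
    positivity
  · rw [outSum_combo, inSum_combo, hx2 v hv1 hv2, hy2 v hv1 hv2]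
  · rw [outSum_combo, inSum_combo]
    nlinarith [hx3, hy3]

lemma edges_mem {A : Finset (V × V)} {s t : V} {p : List V} (hp : IsPath A s t p)
    {e : V × V} (he : e ∈ pathEdges p) : e ∈ A :=
  pathEdges_chain hp.1 he

lemma chi_supp {p : List V} {e : V × V} (h : chi p e ≠ 0) : e ∈ pathEdges p := by
  by_contra hc; exact h (by simp [chi, hc])

lemma chi_eq_one {p : List V} {e : V × V} (h : e ∈ pathEdges p) : chi p e = 1 := by
  simp [chi, h]

lemma chi_eq_zero {p : List V} {e : V × V} (h : e ∉ pathEdges p) : chi p e = 0 := by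
  simp [chi, h]

lemma isPath_head_cons {A : Finset (V × V)} {s t : V} {p : List V} (hp : IsPath A s t p) :
    ∃ p', p = s :: p' := by
  obtain ⟨-, h, -, -⟩ := hp
  cases p with
  | nil => simp at h
  | cons a p' => exact ⟨p', by simpa using (by simpa using h : a = s) ▸ rfl⟩

lemma s_not_mem_tail {A : Finset (V × V)} {s t : V} {p p' : List V} (hp : IsPath A s t p)
    (hp' : p = s :: p') : s ∉ p' := by
  have := hp.2.2.2
  rw [hp'] at this
  exact (List.nodup_cons.1 this).1

lemma const_along {A : Finset (V × V)} {x : V × V → ℝ} :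
    ∀ (u v : V) (l : List V),
    List.Chain' (fun a b => (a, b) ∈ A) (u :: v :: l) →
    (u :: v :: l).Nodup →
    (∀ w ∈ (v :: l).dropLast, outSum A x w = inSum A x w) →
    (∀ e : V × V, x e ≠ 0 → e.2 ∈ (v :: l).dropLast → e ∈ pathEdges (u :: v :: l)) →
    (∀ e : V × V, x e ≠ 0 → e.1 ∈ (v :: l).dropLast → e ∈ pathEdges (u :: v :: l)) →
    ∀ e ∈ pathEdges (u :: v :: l), x e = x (u, v)
  | u, v, [], _, _, _, _, _, e, he => by
    rw [pathEdges_cons₂, pathEdges_single] at he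
    simp at he
    rw [he]
  | u, v, w :: l', hc, hn, hcons, hin, hout, e, he => by
    have hvmem : v ∈ (v :: w :: l').dropLast := by simp
    have huv : (u, v) ∈ pathEdges (u :: v :: w :: l') := by
      rw [pathEdges_cons₂]; exact List.mem_cons_self
    have hvw : (v, w) ∈ pathEdges (u :: v :: w :: l') := pathEdges_mem_adj v w [u] l'
    have hstep : x (v, w) = x (u, v) := by
      have hcv := hcons v hvmem
      have hinv : inSum A x v = x (u, v) := by
        refine inSum_eq_single (pathEdges_chain hc huv) rfl (fun a ha h1 => ?_)
        obtain ⟨a1, a2⟩ := a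
        cases h1
        exact Prod.ext (fst_unique hn (hin _ ha (by simpa using hvmem)) huv) rfl
      have houtv : outSum A x v = x (v, w) := by
        refine outSum_eq_single (pathEdges_chain hc hvw) rfl (fun a ha h1 => ?_)
        obtain ⟨a1, a2⟩ := a
        cases h1
        exact Prod.ext rfl (snd_unique hn (hout _ ha (by simpa using hvmem)) hvw)
      rw [← houtv, hcv, hinv]
    rw [pathEdges_cons₂] at he
    rcases List.mem_cons.1 he with rfl | he'
    · rfl
    · rw [← hstep]
      refine const_along v w l' (List.isChain_cons_cons.1 hc).2 (List.nodup_cons.1 hn).2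
        (fun z hz => hcons z (by
          rw [List.dropLast_cons₂]
          exact List.mem_cons_of_mem _ hz)) ?_ ?_ e he'
      · intro a ha h2
        have hmem : a ∈ pathEdges (u :: v :: w :: l') := hin a ha (by
          rw [List.dropLast_cons₂]
          exact List.mem_cons_of_mem _ h2)
        rw [pathEdges_cons₂] at hmem
        rcases List.mem_cons.1 hmem with rfl | hmem'
        · exfalso
          have : v ∈ (w :: l').dropLast := h2
          exact (List.nodup_cons.1 (List.nodup_cons.1 hn).2).1
            (List.dropLast_subset _ this)
        · exact hmem'
      · intro a ha h2
        have hmem : a ∈ pathEdges (u :: v :: w :: l') := hout a ha (by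
          rw [List.dropLast_cons₂]
          exact List.mem_cons_of_mem _ h2)
        rw [pathEdges_cons₂] at hmem
        rcases List.mem_cons.1 hmem with rfl | hmem'
        · exfalso
          have : u ∈ (w :: l').dropLast := h2
          have : u ∈ v :: w :: l' :=
            List.mem_cons_of_mem _ (List.dropLast_subset _ this)
          exact (List.nodup_cons.1 hn).1 this
        · exact hmem'

lemma split_first_mem (q : List V) : ∀ (l : List V), (∃ z ∈ l, z ∈ q) →
    ∃ (α : List V) (b : V) (Z : List V), l = α ++ b :: Z ∧ b ∈ q ∧ ∀ z ∈ α, z ∉ q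
  | [], h => by simp at h
  | c :: l', h => by
    by_cases hc : c ∈ q
    · exact ⟨[], c, l', rfl, hc, by simp⟩
    · have h' : ∃ z ∈ l', z ∈ q := by
        obtain ⟨z, hz1, hz2⟩ := h
        rcases List.mem_cons.1 hz1 with rfl | hz1
        · exact absurd hz2 hc
        · exact ⟨z, hz1, hz2⟩
      obtain ⟨α, b, Z, h1, h2, h3⟩ := split_first_mem q l' h'
      exact ⟨c :: α, b, Z, by rw [List.cons_append, h1], h2, fun z hz => by
        rcases List.mem_cons.1 hz with rfl | hz
        · exact hc
        · exact h3 z hz⟩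

lemma getLast_not_mem_dropLast (l : List V) (h : l ≠ []) (hn : l.Nodup) :
    l.getLast h ∉ l.dropLast := by
  intro hmem
  have hd : l.dropLast ++ [l.getLast h] = l := List.dropLast_append_getLast h
  rw [← hd, List.nodup_append'] at hn
  exact hn.2.2 hmem (by simp)

lemma mem_of_getLast?_eq {l : List V} {a : V} (h : l.getLast? = some a) : a ∈ l := by
  have : a ∈ l.getLast? := by rw [h]; rfl
  obtain ⟨h1, h2⟩ := List.mem_getLast?_eq_getLast this
  rw [h2]
  exact List.getLast_mem h1

lemma last_edge_mem (u : V) : ∀ (l : List V), (l ++ [u]).getLast (by simp) = u ∧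
    ((l ++ [u]).Nodup → u ∉ l) := by
  intro l
  constructor
  · exact List.getLast_concat
  · intro hn hu
    rw [List.nodup_append'] at hn
    exact hn.2.2 hu (by simp)

lemma key_div {A : Finset (V × V)} {t s : V} {x : V × V → ℝ} {v w : V} {p₃ q₃ : List V}
    (hp : IsPath A s t (s :: v :: p₃)) (hq : IsPath A s t (s :: w :: q₃))
    (hnc : ∀ (v' : V) (p₁ p₂ q₁ q₂ : List V), s :: v :: p₃ = p₁ ++ v' :: p₂ →
      s :: w :: q₃ = q₁ ++ v' :: q₂ → p₁ = q₁ ∨ p₂ = q₂)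
    (hflow : IsFlow A s t x)
    (hxsupp : ∀ a, x a ≠ 0 → a ∈ pathEdges (s :: v :: p₃) ∨ a ∈ pathEdges (s :: w :: q₃))
    (hsupp : ∀ a, a ∉ pathEdges (s :: v :: p₃) → a ∉ pathEdges (s :: w :: q₃) → x a = 0)
    (hins : inSum A x s = 0)
    (htp : t ∈ v :: p₃) (htq : t ∈ w :: q₃) (hvw : v ≠ w) :
    ∃ lam mu : ℝ, 0 ≤ lam ∧ 0 ≤ mu ∧ lam + mu = 1 ∧
      lam • chi (s :: v :: p₃) + mu • chi (s :: w :: q₃) = x := by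
  have hndp0 := hp.2.2.2
  have hndq0 := hq.2.2.2
  -- split the tail of p at the first node in q
  obtain ⟨α, b, Z, htp_split, hbq, hαq⟩ := split_first_mem (s :: w :: q₃) (v :: p₃)
    ⟨t, htp, List.mem_cons_of_mem _ htq⟩
  have hpsplit : s :: v :: p₃ = (s :: α) ++ b :: Z := by rw [List.cons_append, htp_split]
  obtain ⟨q₁, q₂, hqsplit⟩ := List.append_of_mem hbq
  have hZq : Z = q₂ := by
    rcases hnc b (s :: α) Z q₁ q₂ hpsplit hqsplit with h | h
    · exfalso
      rw [← h] at hqsplit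
      cases α with
      | nil =>
        have h1 : v = b ∧ p₃ = Z := by simpa using htp_split
        have h2 : w = b ∧ q₃ = q₂ := by simpa using hqsplit
        exact hvw (h1.1.trans h2.1.symm)
      | cons c α' =>
        have h1 : v = c := by simpa using congrArg List.head? htp_split
        have h2' : w :: q₃ = c :: (α' ++ b :: q₂) := by simpa using hqsplit
        have h2 : w = c := by simpa using congrArg List.head? h2'
        exact hvw (h1.trans h2.symm)
    · exact h
  rw [← hZq] at hqsplit
  clear hZq
  -- q₁ = s :: β
  obtain ⟨β, hq₁⟩ : ∃ β, q₁ = s :: β := by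
    cases q₁ with
    | nil =>
      exfalso
      have hsb : s = b := by simpa using congrArg List.head? hqsplit
      have : b ∈ v :: p₃ := by rw [htp_split]; simp
      rw [← hsb] at this
      exact s_not_mem_tail hp rfl this
    | cons s' β =>
      have : s' = s := by simpa using (congrArg List.head? hqsplit).symm
      exact ⟨β, by rw [this]⟩
  subst hq₁
  have hndp : ((s :: α) ++ b :: Z).Nodup := hpsplit ▸ hndp0
  have hndq : ((s :: β) ++ b :: Z).Nodup := hqsplit ▸ hndq0
  rw [List.nodup_append'] at hndp hndq
  have hdisjP := hndp.2.2
  have hdisjQ := hndq.2.2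
  have hsmemq : s ∈ s :: w :: q₃ := List.mem_cons_self
  have htmemq : t ∈ s :: w :: q₃ := List.mem_cons_of_mem _ htq
  have hbβ : b ∉ β := fun h => hdisjQ (List.mem_cons_of_mem _ h) (List.mem_cons_self)
  have hbα : b ∉ α := fun h => hdisjP (List.mem_cons_of_mem _ h) (List.mem_cons_self)
  have hbns : b ≠ s := fun h => hdisjP (h ▸ List.mem_cons_self) (List.mem_cons_self)
  have hβq : ∀ u ∈ β, u ∈ s :: w :: q₃ := fun u hu => by
    rw [hqsplit]; exact List.mem_append_left _ (List.mem_cons_of_mem _ hu)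
  have hβp : ∀ u ∈ β, u ∉ s :: v :: p₃ := by
    intro u huβ hup
    have hsβnd : (s :: β).Nodup := hndq.1
    have hus : u ≠ s := fun h => (List.nodup_cons.1 hsβnd).1 (h ▸ huβ)
    have hutp : u ∈ v :: p₃ := by
      rcases List.mem_cons.1 hup with h | h
      · exact absurd h hus
      · exact h
    have huq : u ∈ s :: w :: q₃ := hβq u huβ
    have huα : u ∉ α := fun h => hαq u h huq
    have hubZ : u ∈ b :: Z := by
      have : u ∈ α ++ b :: Z := htp_split ▸ hutp
      rcases List.mem_append.1 this with h | h
      · exact absurd h huα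
      · exact h
    have hub : u ≠ b := fun h => hbβ (h ▸ huβ)
    have huZ : u ∈ Z := by
      rcases List.mem_cons.1 hubZ with h | h
      · exact absurd h hub
      · exact h
    obtain ⟨r₁, r₂, hZr⟩ := List.append_of_mem huZ
    obtain ⟨β₁, β₂, hβr⟩ := List.append_of_mem huβ
    have hpsplit2 : s :: v :: p₃ = (s :: α ++ b :: r₁) ++ u :: r₂ := by
      rw [hpsplit, hZr]; simp
    have hqsplit2 : s :: w :: q₃ = (s :: β₁) ++ u :: (β₂ ++ b :: Z) := by
      rw [hqsplit, hβr]; simp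
    rcases hnc u _ _ _ _ hpsplit2 hqsplit2 with h | h
    · have : b ∈ s :: β₁ := by rw [← h]; simp
      rcases List.mem_cons.1 this with h' | h'
      · exact hbns h'
      · exact hbβ (by rw [hβr]; exact List.mem_append_left _ h')
    · have hbr₂ : b ∈ r₂ := by rw [h]; simp
      have : b ∈ Z := by rw [hZr]; exact List.mem_append_right _ (List.mem_cons_of_mem _ hbr₂)
      exact (List.nodup_cons.1 hndp.2.1).1 this
  -- heads of the two branches
  obtain ⟨γ', hγ⟩ : ∃ γ', α ++ [b] = v :: γ' := by
    cases α with
    | nil =>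
      have h1 : v = b ∧ p₃ = Z := by simpa using htp_split
      exact ⟨[], by rw [h1.1]; rfl⟩
    | cons c α' =>
      have : v = c := by simpa using congrArg List.head? htp_split
      exact ⟨α' ++ [b], by rw [this]; simp⟩
  obtain ⟨δ', hδ⟩ : ∃ δ', β ++ [b] = w :: δ' := by
    cases β with
    | nil =>
      have h1 : w = b ∧ q₃ = Z := by simpa using hqsplit
      exact ⟨[], by rw [h1.1]; rfl⟩
    | cons c β' =>
      have h2' : w :: q₃ = c :: (β' ++ b :: Z) := by simpa using hqsplit
      have : w = c := by simpa using congrArg List.head? h2'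
      exact ⟨β' ++ [b], by rw [this]; simp⟩
  -- chainP = s :: v :: γ', chainQ = s :: w :: δ', chainZ = b :: Z
  have hchainP_pre : (s :: v :: γ') ++ Z = s :: v :: p₃ := by
    rw [hpsplit, ← hγ]; simp
  have hchainQ_pre : (s :: w :: δ') ++ Z = s :: w :: q₃ := by
    rw [hqsplit, ← hδ]; simp
  have hPEp : pathEdges (s :: v :: p₃) = pathEdges (s :: v :: γ') ++ pathEdges (b :: Z) := by
    rw [hpsplit, pathEdges_append]
    have : (s :: α) ++ [b] = s :: v :: γ' := by rw [List.cons_append, hγ]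
    rw [this]
  have hPEq : pathEdges (s :: w :: q₃) = pathEdges (s :: w :: δ') ++ pathEdges (b :: Z) := by
    rw [hqsplit, pathEdges_append]
    have : (s :: β) ++ [b] = s :: w :: δ' := by rw [List.cons_append, hδ]
    rw [this]
  have hchainP : (s :: v :: γ').Chain' (fun a b => (a, b) ∈ A) :=
    hp.1.prefix ⟨Z, hchainP_pre⟩
  have hchainQ : (s :: w :: δ').Chain' (fun a b => (a, b) ∈ A) :=
    hq.1.prefix ⟨Z, hchainQ_pre⟩
  have hchainZ : (b :: Z).Chain' (fun a b => (a, b) ∈ A) :=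
    hp.1.suffix ⟨s :: α, hpsplit.symm⟩
  have hndP : (s :: v :: γ').Nodup := (List.IsPrefix.sublist ⟨Z, hchainP_pre⟩).nodup hndp0
  have hndQ : (s :: w :: δ').Nodup := (List.IsPrefix.sublist ⟨Z, hchainQ_pre⟩).nodup hndq0
  have hndZ : (b :: Z).Nodup := hndp.2.1
  -- tails and dropLasts
  have htailP : v :: γ' = α ++ [b] := hγ.symm
  have hdropP : s :: α = (s :: v :: γ').dropLast := by
    have : (s :: v :: γ').dropLast = ((s :: α) ++ [b]).dropLast := by
      rw [List.cons_append, hγ]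
    rw [this, List.dropLast_concat]
  have hdropQ : s :: β = (s :: w :: δ').dropLast := by
    have : (s :: w :: δ').dropLast = ((s :: β) ++ [b]).dropLast := by
      rw [List.cons_append, hδ]
    rw [this, List.dropLast_concat]
  -- first edges
  have hep_memP : (s, v) ∈ pathEdges (s :: v :: γ') := by
    rw [pathEdges_cons₂]; exact List.mem_cons_self
  have heq_memQ : (s, w) ∈ pathEdges (s :: w :: δ') := by
    rw [pathEdges_cons₂]; exact List.mem_cons_self
  have hep_memp : (s, v) ∈ pathEdges (s :: v :: p₃) := by
    rw [pathEdges_cons₂]; exact List.mem_cons_self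
  have heq_memq : (s, w) ∈ pathEdges (s :: w :: q₃) := by
    rw [pathEdges_cons₂]; exact List.mem_cons_self
  -- last edges
  obtain ⟨L, u₀, hLu⟩ := (List.eq_nil_or_concat (s :: α)).resolve_left (List.cons_ne_nil _ _)
  obtain ⟨M, u₁, hMu⟩ := (List.eq_nil_or_concat (s :: β)).resolve_left (List.cons_ne_nil _ _)
  rw [List.concat_eq_append] at hLu hMu
  have hfp_memP : (u₀, b) ∈ pathEdges (s :: v :: γ') := by
    have h1 : s :: v :: γ' = L ++ u₀ :: b :: [] := by
      rw [← hγ, ← List.cons_append, hLu, List.append_assoc]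
      rfl
    rw [h1]
    exact pathEdges_mem_adj u₀ b L []
  have hfq_memQ : (u₁, b) ∈ pathEdges (s :: w :: δ') := by
    have h1 : s :: w :: δ' = M ++ u₁ :: b :: [] := by
      rw [← hδ, ← List.cons_append, hMu, List.append_assoc]
      rfl
    rw [h1]
    exact pathEdges_mem_adj u₁ b M []
  have hfp_memp : (u₀, b) ∈ pathEdges (s :: v :: p₃) := by
    rw [hPEp]; exact List.mem_append_left _ hfp_memP
  have hfq_memq : (u₁, b) ∈ pathEdges (s :: w :: q₃) := by
    rw [hPEq]; exact List.mem_append_left _ hfq_memQ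
  have hu₀mem : u₀ ∈ s :: α := by rw [hLu]; simp
  have hu₁mem : u₁ ∈ s :: β := by rw [hMu]; simp
  -- u₀ ≠ u₁
  have hu01 : u₀ ≠ u₁ := by
    intro h
    have hαnil : u₀ = s → α = [] := by
      intro h'
      by_contra hα
      have hs_dl : s ∈ (s :: α).dropLast := by
        cases α with
        | nil => exact absurd rfl hα
        | cons a α₂ => rw [List.dropLast_cons₂]; exact List.mem_cons_self
      have h9 : (s :: α).getLast? = some u₀ := by rw [hLu]; exact List.getLast?_concat
      rw [List.getLast?_eq_getLast_of_ne_nil (List.cons_ne_nil s α)] at h9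
      have hgl : (s :: α).getLast (List.cons_ne_nil s α) = u₀ := by injection h9
      rw [h'] at hgl
      exact getLast_not_mem_dropLast _ _ hndp.1 (by rw [hgl]; exact hs_dl)
    have hβnil : u₁ = s → β = [] := by
      intro h'
      by_contra hβ
      have hs_dl : s ∈ (s :: β).dropLast := by
        cases β with
        | nil => exact absurd rfl hβ
        | cons a β₂ => rw [List.dropLast_cons₂]; exact List.mem_cons_self
      have h9 : (s :: β).getLast? = some u₁ := by rw [hMu]; exact List.getLast?_concat
      rw [List.getLast?_eq_getLast_of_ne_nil (List.cons_ne_nil s β)] at h9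
      have hgl : (s :: β).getLast (List.cons_ne_nil s β) = u₁ := by injection h9
      rw [h'] at hgl
      exact getLast_not_mem_dropLast _ _ hndq.1 (by rw [hgl]; exact hs_dl)
    by_cases hu₀s : u₀ = s
    · have hα0 := hαnil hu₀s
      have hβ0 := hβnil (by rw [← h]; exact hu₀s)
      subst hα0; subst hβ0
      have h1 : v = b ∧ p₃ = Z := by simpa using htp_split
      have h2 : w :: q₃ = b :: Z := by simpa using hqsplit
      exact hvw (by rw [h1.1, (by simpa using h2 : w = b ∧ q₃ = Z).1])
    · have hu₀α : u₀ ∈ α := by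
        rcases List.mem_cons.1 hu₀mem with h' | h'
        · exact absurd h' hu₀s
        · exact h'
      have hu₁β : u₁ ∈ β := by
        rcases List.mem_cons.1 hu₁mem with h' | h'
        · exact absurd (h.trans h') hu₀s
        · exact h'
      exact hαq u₀ hu₀α (h ▸ hβq u₁ hu₁β)
  have hfpq : (u₀, b) ≠ (u₁, b) := fun h => hu01 (by injection h)
  -- value at s
  have hepq : ((s, v) : V × V) ≠ (s, w) := fun h => hvw (by injection h)
  have houts : outSum A x s = x (s, v) + x (s, w) := by
    refine outSum_eq_pair (edges_mem hp hep_memp) rfl (edges_mem hq heq_memq) rfl hepq ?_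
    intro a ha h1
    obtain ⟨a1, a2⟩ := a
    cases h1
    rcases hxsupp _ ha with h | h
    · exact Or.inl (Prod.ext rfl (snd_unique hndp0 h hep_memp))
    · exact Or.inr (Prod.ext rfl (snd_unique hndq0 h heq_memq))
  have hsum1 : x (s, v) + x (s, w) = 1 := by
    have := hflow.2.2.2
    rw [houts, hins] at this
    linarith
  -- more membership facts
  have hsnα : ∀ z ∈ α, z ≠ s := fun z hz h => hαq z hz (h ▸ hsmemq)
  have htnα : ∀ z ∈ α, z ≠ t := fun z hz h => hαq z hz (h ▸ htmemq)
  have hsnβ : ∀ z ∈ β, z ≠ s := fun z hz h => (List.nodup_cons.1 hndq.1).1 (h ▸ hz)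
  have htnβ : ∀ z ∈ β, z ≠ t := fun z hz h => hβp z hz (h ▸ List.mem_cons_of_mem _ htp)
  -- x is constant on the edges of chainP
  have hconstP : ∀ e ∈ pathEdges (s :: v :: γ'), x e = x (s, v) := by
    cases γ' with
    | nil =>
      intro e he
      rw [pathEdges_cons₂, pathEdges_single] at he
      simp only [List.mem_singleton] at he
      rw [he]
    | cons g γ'' =>
      refine const_along s v (g :: γ'') hchainP hndP ?_ ?_ ?_
      · intro z hz
        have hzα : z ∈ α := by
          have h1 : (v :: g :: γ'').dropLast = α := by
            have := congrArg List.dropLast hγ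
            rw [List.dropLast_concat] at this
            exact this.symm
          rw [← h1]
          exact hz
        exact hflow.2.2.1 z (hsnα z hzα) (htnα z hzα)
      · intro e he hz
        have hzα : e.2 ∈ α := by
          have h1 : (v :: g :: γ'').dropLast = α := by
            have := congrArg List.dropLast hγ
            rw [List.dropLast_concat] at this
            exact this.symm
          rw [← h1]
          exact hz
        rcases hxsupp e he with h | h
        · rw [hPEp] at h
          rcases List.mem_append.1 h with h | h
          · exact h
          · exfalso
            have := snd_mem_tail h
            exact hdisjP (List.mem_cons_of_mem _ hzα) (List.mem_cons_of_mem _ this)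
        · exact absurd (snd_mem_of_mem_pathEdges h) (hαq e.2 hzα)
      · intro e he hz
        have hzα : e.1 ∈ α := by
          have h1 : (v :: g :: γ'').dropLast = α := by
            have := congrArg List.dropLast hγ
            rw [List.dropLast_concat] at this
            exact this.symm
          rw [← h1]
          exact hz
        rcases hxsupp e he with h | h
        · rw [hPEp] at h
          rcases List.mem_append.1 h with h | h
          · exact h
          · exfalso
            have := fst_mem_dropLast h
            exact hdisjP (List.mem_cons_of_mem _ hzα)
              (List.dropLast_subset _ this)
        · exact absurd (fst_mem_of_mem_pathEdges h) (hαq e.1 hzα)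
  have hconstQ : ∀ e ∈ pathEdges (s :: w :: δ'), x e = x (s, w) := by
    cases δ' with
    | nil =>
      intro e he
      rw [pathEdges_cons₂, pathEdges_single] at he
      simp only [List.mem_singleton] at he
      rw [he]
    | cons g δ'' =>
      refine const_along s w (g :: δ'') hchainQ hndQ ?_ ?_ ?_
      · intro z hz
        have hzβ : z ∈ β := by
          have h1 : (w :: g :: δ'').dropLast = β := by
            have := congrArg List.dropLast hδ
            rw [List.dropLast_concat] at this
            exact this.symm
          rw [← h1]
          exact hz
        exact hflow.2.2.1 z (hsnβ z hzβ) (htnβ z hzβ)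
      · intro e he hz
        have hzβ : e.2 ∈ β := by
          have h1 : (w :: g :: δ'').dropLast = β := by
            have := congrArg List.dropLast hδ
            rw [List.dropLast_concat] at this
            exact this.symm
          rw [← h1]
          exact hz
        rcases hxsupp e he with h | h
        · exact absurd (snd_mem_of_mem_pathEdges h) (hβp e.2 hzβ)
        · rw [hPEq] at h
          rcases List.mem_append.1 h with h | h
          · exact h
          · exfalso
            have := snd_mem_tail h
            exact hdisjQ (List.mem_cons_of_mem _ hzβ) (List.mem_cons_of_mem _ this)
      · intro e he hz
        have hzβ : e.1 ∈ β := by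
          have h1 : (w :: g :: δ'').dropLast = β := by
            have := congrArg List.dropLast hδ
            rw [List.dropLast_concat] at this
            exact this.symm
          rw [← h1]
          exact hz
        rcases hxsupp e he with h | h
        · exact absurd (fst_mem_of_mem_pathEdges h) (hβp e.1 hzβ)
        · rw [hPEq] at h
          rcases List.mem_append.1 h with h | h
          · exact h
          · exfalso
            have := fst_mem_dropLast h
            exact hdisjQ (List.mem_cons_of_mem _ hzβ)
              (List.dropLast_subset _ this)
  -- x = 1 on the common suffix edges
  have hconstZ : ∀ e ∈ pathEdges (b :: Z), x e = 1 := by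
    cases Z with
    | nil =>
      intro e he
      rw [pathEdges_single] at he
      exact absurd he (List.not_mem_nil)
    | cons z₀ Z₂ =>
      have hbt : b ≠ t := by
        intro h
        have h1 : t ∈ z₀ :: Z₂ := by
          have h2 := hp.2.2.1
          rw [hpsplit, List.getLast?_append_of_ne_nil _ (List.cons_ne_nil _ _),
            List.getLast?_cons_cons] at h2
          exact mem_of_getLast?_eq h2
        exact (List.nodup_cons.1 hndZ).1 (h ▸ h1)
      have hg_p : (b, z₀) ∈ pathEdges (s :: v :: p₃) := by
        rw [hPEp]
        refine List.mem_append_right _ ?_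
        rw [pathEdges_cons₂]
        exact List.mem_cons_self
      have hg_q : (b, z₀) ∈ pathEdges (s :: w :: q₃) := by
        rw [hPEq]
        refine List.mem_append_right _ ?_
        rw [pathEdges_cons₂]
        exact List.mem_cons_self
      have hinb : inSum A x b = x (u₀, b) + x (u₁, b) := by
        refine inSum_eq_pair (edges_mem hp hfp_memp) rfl (edges_mem hq hfq_memq) rfl hfpq ?_
        intro a ha h1
        obtain ⟨a1, a2⟩ := a
        cases h1
        rcases hxsupp _ ha with h | h
        · exact Or.inl (Prod.ext (fst_unique hndp0 h hfp_memp) rfl)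
        · exact Or.inr (Prod.ext (fst_unique hndq0 h hfq_memq) rfl)
      have houtb : outSum A x b = x (b, z₀) := by
        refine outSum_eq_single (edges_mem hp hg_p) rfl ?_
        intro a ha h1
        obtain ⟨a1, a2⟩ := a
        cases h1
        rcases hxsupp _ ha with h | h
        · exact Prod.ext rfl (snd_unique hndp0 h hg_p)
        · exact Prod.ext rfl (snd_unique hndq0 h hg_q)
      have hxg : x (b, z₀) = 1 := by
        have hcons := hflow.2.2.1 b hbns hbt
        rw [houtb, hinb, hconstP _ hfp_memP, hconstQ _ hfq_memQ] at hcons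
        linarith
      -- propagate along b :: z₀ :: Z₂
      have htZ : t = (z₀ :: Z₂).getLast (List.cons_ne_nil _ _) := by
        have h2 := hp.2.2.1
        rw [hpsplit, List.getLast?_append_of_ne_nil _ (List.cons_ne_nil _ _),
          List.getLast?_cons_cons, List.getLast?_eq_getLast_of_ne_nil (List.cons_ne_nil z₀ Z₂)] at h2
        injection h2 with h2
        exact h2.symm
      have hmemZ : ∀ z ∈ (z₀ :: Z₂).dropLast, z ∈ b :: z₀ :: Z₂ :=
        fun z hz => List.mem_cons_of_mem _ (List.dropLast_subset _ hz)
      have Hcons : ∀ z ∈ (z₀ :: Z₂).dropLast, outSum A x z = inSum A x z := by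
        intro z hz
        refine hflow.2.2.1 z (fun h => hdisjP (List.mem_cons_self) (h ▸ hmemZ z hz)) ?_
        intro h
        refine getLast_not_mem_dropLast (z₀ :: Z₂) (List.cons_ne_nil _ _)
          (List.nodup_cons.1 hndZ).2 ?_
        rw [← htZ, ← h]
        exact hz
      have Hclass : ∀ e : V × V, x e ≠ 0 →
          (e.2 ∈ b :: z₀ :: Z₂ → e.2 ≠ b → e ∈ pathEdges (b :: z₀ :: Z₂)) := by
        intro e he h2 hb2
        rcases hxsupp e he with h | h
        · rw [hPEp] at h
          rcases List.mem_append.1 h with h | h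
          · exfalso
            have h3 := snd_mem_tail h
            rw [show (s :: v :: γ').tail = v :: γ' from rfl, htailP] at h3
            rcases List.mem_append.1 h3 with h3 | h3
            · exact hdisjP (List.mem_cons_of_mem _ h3) h2
            · exact hb2 (by simpa using h3)
          · exact h
        · rw [hPEq] at h
          rcases List.mem_append.1 h with h | h
          · exfalso
            have h3 := snd_mem_tail h
            rw [show (s :: w :: δ').tail = w :: δ' from rfl, ← hδ] at h3
            rcases List.mem_append.1 h3 with h3 | h3
            · exact hdisjQ (List.mem_cons_of_mem _ h3) h2
            · exact hb2 (by simpa using h3)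
          · exact h
      have Hin : ∀ e : V × V, x e ≠ 0 → e.2 ∈ (z₀ :: Z₂).dropLast →
          e ∈ pathEdges (b :: z₀ :: Z₂) := by
        intro e he hz
        refine Hclass e he (hmemZ _ hz) ?_
        intro h
        exact (List.nodup_cons.1 hndZ).1 (h ▸ List.dropLast_subset _ hz)
      have Hout : ∀ e : V × V, x e ≠ 0 → e.1 ∈ (z₀ :: Z₂).dropLast →
          e ∈ pathEdges (b :: z₀ :: Z₂) := by
        intro e he hz
        have h2 : e.1 ∈ z₀ :: Z₂ := List.dropLast_subset _ hz
        rcases hxsupp e he with h | h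
        · rw [hPEp] at h
          rcases List.mem_append.1 h with h | h
          · exfalso
            have h3 := fst_mem_dropLast h
            rw [← hdropP] at h3
            exact hdisjP h3 (List.mem_cons_of_mem _ h2)
          · exact h
        · rw [hPEq] at h
          rcases List.mem_append.1 h with h | h
          · exfalso
            have h3 := fst_mem_dropLast h
            rw [← hdropQ] at h3
            exact hdisjQ h3 (List.mem_cons_of_mem _ h2)
          · exact h
      intro e he
      rw [const_along b z₀ Z₂ hchainZ hndZ Hcons Hin Hout e he, hxg]
  -- assembly
  have hPQ : ∀ a : V × V, a ∈ pathEdges (s :: v :: γ') → a ∈ pathEdges (s :: w :: δ') → False := by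
    intro a haP haQ
    have h2P : a.2 ∈ α ++ [b] := by
      have := snd_mem_tail haP
      rwa [show (s :: v :: γ').tail = v :: γ' from rfl, htailP] at this
    have h2Q : a.2 ∈ β ++ [b] := by
      have := snd_mem_tail haQ
      rwa [show (s :: w :: δ').tail = w :: δ' from rfl, ← hδ] at this
    have h2b : a.2 = b := by
      rcases List.mem_append.1 h2P with h | h
      · exfalso
        rcases List.mem_append.1 h2Q with h' | h'
        · exact hαq _ h (hβq _ h')
        · exact hαq _ h (by rw [List.mem_singleton.1 h']; exact hbq)
      · simpa using h
    obtain ⟨a1, a2⟩ := a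
    simp only at h2b
    subst h2b
    have h1 : a1 = u₀ := fst_unique hndP haP hfp_memP
    have h2 : a1 = u₁ := fst_unique hndQ haQ hfq_memQ
    exact hu01 (h1 ▸ h2 ▸ rfl)
  have hPZ : ∀ a : V × V, a ∈ pathEdges (s :: v :: γ') → a ∈ pathEdges (b :: Z) → False := by
    intro a haP haZ
    have h2P : a.2 ∈ α ++ [b] := by
      have := snd_mem_tail haP
      rwa [show (s :: v :: γ').tail = v :: γ' from rfl, htailP] at this
    have h2Z : a.2 ∈ Z := by
      have := snd_mem_tail haZ
      exact this
    rcases List.mem_append.1 h2P with h | h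
    · exact hdisjP (List.mem_cons_of_mem _ h) (List.mem_cons_of_mem _ h2Z)
    · exact (List.nodup_cons.1 hndZ).1 (by rw [← List.mem_singleton.1 h]; exact h2Z)
  have hQZ : ∀ a : V × V, a ∈ pathEdges (s :: w :: δ') → a ∈ pathEdges (b :: Z) → False := by
    intro a haQ haZ
    have h2Q : a.2 ∈ β ++ [b] := by
      have := snd_mem_tail haQ
      rwa [show (s :: w :: δ').tail = w :: δ' from rfl, ← hδ] at this
    have h2Z : a.2 ∈ Z := by
      have := snd_mem_tail haZ
      exact this
    rcases List.mem_append.1 h2Q with h | h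
    · exact hdisjQ (List.mem_cons_of_mem _ h) (List.mem_cons_of_mem _ h2Z)
    · exact (List.nodup_cons.1 hndZ).1 (by rw [← List.mem_singleton.1 h]; exact h2Z)
  refine ⟨x (s, v), x (s, w), hflow.2.1 _, hflow.2.1 _, hsum1, funext fun a => ?_⟩
  simp only [Pi.add_apply, Pi.smul_apply, smul_eq_mul]
  by_cases haP : a ∈ pathEdges (s :: v :: γ')
  · have hc1 : chi (s :: v :: p₃) a = 1 := chi_eq_one (by rw [hPEp]; exact List.mem_append_left _ haP)
    have hc2 : chi (s :: w :: q₃) a = 0 := chi_eq_zero (by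
      rw [hPEq]
      intro h
      rcases List.mem_append.1 h with h | h
      · exact hPQ a haP h
      · exact hPZ a haP h)
    rw [hc1, hc2, hconstP a haP]
    ring
  · by_cases haQ : a ∈ pathEdges (s :: w :: δ')
    · have hc1 : chi (s :: v :: p₃) a = 0 := chi_eq_zero (by
        rw [hPEp]
        intro h
        rcases List.mem_append.1 h with h | h
        · exact haP h
        · exact hQZ a haQ h)
      have hc2 : chi (s :: w :: q₃) a = 1 := chi_eq_one (by rw [hPEq]; exact List.mem_append_left _ haQ)
      rw [hc1, hc2, hconstQ a haQ]
      ring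
    · by_cases haZ : a ∈ pathEdges (b :: Z)
      · have hc1 : chi (s :: v :: p₃) a = 1 := chi_eq_one (by rw [hPEp]; exact List.mem_append_right _ haZ)
        have hc2 : chi (s :: w :: q₃) a = 1 := chi_eq_one (by rw [hPEq]; exact List.mem_append_right _ haZ)
        rw [hc1, hc2, hconstZ a haZ]
        linarith
      · have hc1 : chi (s :: v :: p₃) a = 0 := chi_eq_zero (by
          rw [hPEp]
          intro h
          rcases List.mem_append.1 h with h | h
          · exact haP h
          · exact haZ h)
        have hc2 : chi (s :: w :: q₃) a = 0 := chi_eq_zero (by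
          rw [hPEq]
          intro h
          rcases List.mem_append.1 h with h | h
          · exact haQ h
          · exact haZ h)
        have hx0 : x a = 0 := hsupp a
          (by rw [hPEp]; intro h; rcases List.mem_append.1 h with h | h
              exacts [haP h, haZ h])
          (by rw [hPEq]; intro h; rcases List.mem_append.1 h with h | h
              exacts [haQ h, haZ h])
        rw [hc1, hc2, hx0]
        ring

lemma key {A : Finset (V × V)} (t : V) :
    ∀ (n : ℕ) (p q : List V) (s : V) (x : V × V → ℝ), p.length ≤ n →
    IsPath A s t p → IsPath A s t q →
    (∀ (v : V) (p₁ p₂ q₁ q₂ : List V), p = p₁ ++ v :: p₂ → q = q₁ ++ v :: q₂ →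
      p₁ = q₁ ∨ p₂ = q₂) →
    IsFlow A s t x →
    (∀ a, a ∉ pathEdges p → a ∉ pathEdges q → x a = 0) →
    ∃ lam mu : ℝ, 0 ≤ lam ∧ 0 ≤ mu ∧ lam + mu = 1 ∧ lam • chi p + mu • chi q = x := by
  intro n
  induction n with
  | zero =>
    intro p q s x hlen hp hq hnc hflow hsupp
    exfalso
    rw [Nat.le_zero, List.length_eq_zero_iff] at hlen
    subst hlen
    simp [IsPath] at hp
  | succ n IH =>
    intro p q s x hlen hp hq hnc hflow hsupp
    obtain ⟨p', rfl⟩ := isPath_head_cons hp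
    obtain ⟨q', rfl⟩ := isPath_head_cons hq
    have hxsupp : ∀ a, x a ≠ 0 → a ∈ pathEdges (s :: p') ∨ a ∈ pathEdges (s :: q') := by
      intro a ha
      by_contra h
      push_neg at h
      exact ha (hsupp a h.1 h.2)
    have hins : inSum A x s = 0 := by
      refine inSum_eq_zero (fun a ha h2 => ?_)
      rcases hxsupp a ha with h | h
      · have := snd_mem_tail h; rw [h2] at this
        exact s_not_mem_tail hp rfl this
      · have := snd_mem_tail h; rw [h2] at this
        exact s_not_mem_tail hq rfl this
    cases p' with
    | nil =>
      exfalso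
      have hst : s = t := by simpa [IsPath] using hp.2.2.1
      have hq0 : q' = [] := by
        cases q' with
        | nil => rfl
        | cons w q₃ =>
          exfalso
          have hlast : t ∈ w :: q₃ := by
            have := hq.2.2.1
            rw [List.getLast?_cons_cons] at this
            exact mem_of_getLast?_eq this
          rw [← hst] at hlast
          exact s_not_mem_tail hq rfl hlast
      subst hq0
      have h0 : ∀ a, x a = 0 := fun a =>
        hsupp a (by simp [pathEdges_single]) (by simp [pathEdges_single])
      have hout : outSum A x s = 0 := outSum_eq_zero (fun a ha => absurd (h0 a) ha)
      have := hflow.2.2.2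
      rw [hout, hins] at this
      norm_num at this
    | cons v p₃ =>
    have hvs : v ≠ s := fun h => s_not_mem_tail hp rfl (h ▸ List.mem_cons_self)
    have htp : t ∈ v :: p₃ := by
      have := hp.2.2.1
      rw [List.getLast?_cons_cons] at this
      exact mem_of_getLast?_eq this
    cases q' with
    | nil =>
      exfalso
      have hst : s = t := by simpa [IsPath] using hq.2.2.1
      rw [← hst] at htp
      exact s_not_mem_tail hp rfl htp
    | cons w q₃ =>
    have htq : t ∈ w :: q₃ := by
      have := hq.2.2.1
      rw [List.getLast?_cons_cons] at this
      exact mem_of_getLast?_eq this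
    by_cases hvw : v = w
    · subst hvw
      -- shared first arc case
      have hfp : (s, v) ∈ pathEdges (s :: v :: p₃) := by
        rw [pathEdges_cons₂]; exact List.mem_cons_self
      have hfq : (s, v) ∈ pathEdges (s :: v :: q₃) := by
        rw [pathEdges_cons₂]; exact List.mem_cons_self
      have huniq : ∀ a : V × V, x a ≠ 0 → a.1 = s → a = (s, v) := by
        intro a ha h1
        obtain ⟨a1, a2⟩ := a
        cases h1
        rcases hxsupp _ ha with h | h
        · exact Prod.ext rfl (snd_unique hp.2.2.2 h hfp)
        · exact Prod.ext rfl (snd_unique hq.2.2.2 h hfq)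
      have houts : outSum A x s = x (s, v) :=
        outSum_eq_single (edges_mem hp hfp) rfl huniq
      have hxe : x (s, v) = 1 := by
        have := hflow.2.2.2
        rw [houts, hins] at this
        linarith
      by_cases hvt : v = t
      · -- p = q = [s, t]
        subst hvt
        have hp₃ : p₃ = [] := by
          cases p₃ with
          | nil => rfl
          | cons z p₄ =>
            exfalso
            have h1 := hp.2.2.1
            rw [List.getLast?_cons_cons, List.getLast?_cons_cons] at h1
            have := mem_of_getLast?_eq h1
            exact (List.nodup_cons.1 (List.nodup_cons.1 hp.2.2.2).2).1 this
        have hq₃ : q₃ = [] := by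
          cases q₃ with
          | nil => rfl
          | cons z q₄ =>
            exfalso
            have h1 := hq.2.2.1
            rw [List.getLast?_cons_cons, List.getLast?_cons_cons] at h1
            have := mem_of_getLast?_eq h1
            exact (List.nodup_cons.1 (List.nodup_cons.1 hq.2.2.2).2).1 this
        subst hp₃; subst hq₃
        refine ⟨1, 0, by norm_num, le_refl 0, by norm_num, funext fun a => ?_⟩
        simp only [Pi.add_apply, Pi.smul_apply, smul_eq_mul, one_mul, zero_mul, add_zero]
        by_cases hae : a = (s, v)
        · subst hae
          rw [chi_eq_one hfp, hxe]
        · rw [chi_eq_zero (fun hc => hae (by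
            rw [pathEdges_cons₂, pathEdges_single] at hc
            simpa using hc))]
          refine (hsupp a ?_ ?_).symm <;>
          · rw [pathEdges_cons₂, pathEdges_single]
            simpa using hae
      · -- recurse
        set chi2 : (V × V) → ℝ := chi [s, v] with hchi2
        have hchi2e : chi2 (s, v) = 1 := chi_eq_one (by rw [pathEdges_pair]; simp)
        have hchi2a : ∀ a : V × V, a ≠ (s, v) → chi2 a = 0 := by
          intro a ha
          refine chi_eq_zero ?_
          rw [pathEdges_pair]
          simpa using ha
        have hsv : (s, v) ∈ A := edges_mem hp hfp
        have houts2 : outSum A chi2 s = 1 := by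
          rw [outSum_eq_single hsv rfl (fun a ha h1 => by
            by_contra h
            exact ha (hchi2a a h)), hchi2e]
        have hins2 : inSum A chi2 s = 0 :=
          inSum_eq_zero (fun a ha h1 => by
            have : a = (s, v) := by by_contra h; exact ha (hchi2a a h)
            rw [this] at h1
            exact hvs h1)
        have houtv2 : outSum A chi2 v = 0 :=
          outSum_eq_zero (fun a ha h1 => by
            have : a = (s, v) := by by_contra h; exact ha (hchi2a a h)
            rw [this] at h1
            exact hvs h1.symm)
        have hinv2 : inSum A chi2 v = 1 := by
          rw [inSum_eq_single hsv rfl (fun a ha h1 => by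
            by_contra h
            exact ha (hchi2a a h)), hchi2e]
        have hout02 : ∀ u, u ≠ s → outSum A chi2 u = 0 := fun u hu =>
          outSum_eq_zero (fun a ha h1 => by
            have : a = (s, v) := by by_contra h; exact ha (hchi2a a h)
            rw [this] at h1
            exact hu h1.symm)
        have hin02 : ∀ u, u ≠ v → inSum A chi2 u = 0 := fun u hu =>
          inSum_eq_zero (fun a ha h1 => by
            have : a = (s, v) := by by_contra h; exact ha (hchi2a a h)
            rw [this] at h1
            exact hu h1.symm)
        set x' : (V × V) → ℝ := x - chi2 with hx'
        have hx'a : ∀ a, x' a = x a - chi2 a := fun a => rfl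
        have hflow' : IsFlow A v t x' := by
          refine ⟨fun a ha => ?_, fun a => ?_, fun u hu1 hu2 => ?_, ?_⟩
          · rw [hx'a, hflow.1 a ha, hchi2a a (fun h => ha (h ▸ hsv))]
            ring
          · rw [hx'a]
            by_cases h : a = (s, v)
            · rw [h, hxe, hchi2e]; norm_num
            · rw [hchi2a a h]
              have := hflow.2.1 a
              linarith
          · rw [hx', outSum_sub, inSum_sub]
            by_cases hus : u = s
            · subst hus
              rw [houts, hxe, houts2, hins, hins2]
              norm_num
            · rw [hout02 u hus, hin02 u hu1, hflow.2.2.1 u hus hu2]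
          · rw [hx', outSum_sub, inSum_sub, houtv2, hinv2,
              hflow.2.2.1 v hvs hvt]
            ring
        have hp' : IsPath A v t (v :: p₃) := by
          refine ⟨(List.isChain_cons_cons.1 hp.1).2, rfl, ?_, (List.nodup_cons.1 hp.2.2.2).2⟩
          have := hp.2.2.1
          rwa [List.getLast?_cons_cons] at this
        have hq' : IsPath A v t (v :: q₃) := by
          refine ⟨(List.isChain_cons_cons.1 hq.1).2, rfl, ?_, (List.nodup_cons.1 hq.2.2.2).2⟩
          have := hq.2.2.1
          rwa [List.getLast?_cons_cons] at this
        have hnc' : ∀ (v' : V) (p₁ p₂ q₁ q₂ : List V), v :: p₃ = p₁ ++ v' :: p₂ →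
            v :: q₃ = q₁ ++ v' :: q₂ → p₁ = q₁ ∨ p₂ = q₂ := by
          intro v' p₁ p₂ q₁ q₂ h1 h2
          rcases hnc v' (s :: p₁) p₂ (s :: q₁) q₂ (by rw [List.cons_append, ← h1])
            (by rw [List.cons_append, ← h2]) with h | h
          · exact Or.inl (by injection h)
          · exact Or.inr h
        have hsupp' : ∀ a, a ∉ pathEdges (v :: p₃) → a ∉ pathEdges (v :: q₃) → x' a = 0 := by
          intro a h1 h2
          rw [hx'a]
          by_cases h : a = (s, v)
          · rw [h, hxe, hchi2e]; ring
          · rw [hchi2a a h, hsupp a ?_ ?_]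
            · ring
            · rw [pathEdges_cons₂]
              intro hc
              rcases List.mem_cons.1 hc with rfl | hc
              · exact h rfl
              · exact h1 hc
            · rw [pathEdges_cons₂]
              intro hc
              rcases List.mem_cons.1 hc with rfl | hc
              · exact h rfl
              · exact h2 hc
        have hsupp'' : ∀ a, a ∉ pathEdges (v :: p₃) → a ∉ pathEdges (v :: q₃) → x' a = 0 := hsupp'
        obtain ⟨lam, mu, hl0, hm0, hlm, heq⟩ := IH (v :: p₃) (v :: q₃) v x'
          (by simpa using hlen) hp' hq' hnc' hflow' hsupp'
        refine ⟨lam, mu, hl0, hm0, hlm, funext fun a => ?_⟩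
        have hca := congrFun heq a
        simp only [Pi.add_apply, Pi.smul_apply, smul_eq_mul] at hca ⊢
        rw [hx'a] at hca
        by_cases hae : a = (s, v)
        · subst hae
          rw [chi_eq_one hfp, chi_eq_one hfq, hxe]
          linarith
        · have hc1 : chi (s :: v :: p₃) a = chi (v :: p₃) a := by
            by_cases h : a ∈ pathEdges (v :: p₃)
            · rw [chi_eq_one h, chi_eq_one (by rw [pathEdges_cons₂]; exact List.mem_cons_of_mem _ h)]
            · rw [chi_eq_zero h, chi_eq_zero (by
                rw [pathEdges_cons₂]
                intro hc
                rcases List.mem_cons.1 hc with rfl | hc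
                · exact hae rfl
                · exact h hc)]
          have hc2 : chi (s :: v :: q₃) a = chi (v :: q₃) a := by
            by_cases h : a ∈ pathEdges (v :: q₃)
            · rw [chi_eq_one h, chi_eq_one (by rw [pathEdges_cons₂]; exact List.mem_cons_of_mem _ h)]
            · rw [chi_eq_zero h, chi_eq_zero (by
                rw [pathEdges_cons₂]
                intro hc
                rcases List.mem_cons.1 hc with rfl | hc
                · exact hae rfl
                · exact h hc)]
          rw [hc1, hc2, hca, hchi2a a hae]
          ring
    · exact key_div hp hq hnc hflow hxsupp hsupp hins htp htq hvw

lemma chi_split {m : List V} {E1 E2 : List (V × V)} (h : pathEdges m = E1 ++ E2)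
    (hdisj : ∀ e, e ∈ E1 → e ∈ E2 → False) (a : V × V) :
    chi m a = (if a ∈ E1 then (1 : ℝ) else 0) + (if a ∈ E2 then 1 else 0) := by
  by_cases h1 : a ∈ E1 <;> by_cases h2 : a ∈ E2
  · exact absurd h2 (fun h2 => hdisj a h1 h2)
  · rw [chi_eq_one (by rw [h]; exact List.mem_append_left _ h1), if_pos h1, if_neg h2]
    norm_num
  · rw [chi_eq_one (by rw [h]; exact List.mem_append_right _ h2), if_neg h1, if_pos h2]
    norm_num
  · have hz : a ∉ pathEdges m := by
      rw [h]
      intro hc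
      rcases List.mem_append.1 hc with hc | hc
      · exact h1 hc
      · exact h2 hc
    rw [chi_eq_zero hz, if_neg h1, if_neg h2]
    norm_num

lemma path_eq_single {A : Finset (V × V)} {s : V} {p : List V} (hp : IsPath A s s p) :
    p = [s] := by
  obtain ⟨p', rfl⟩ := isPath_head_cons hp
  cases p' with
  | nil => rfl
  | cons c r =>
    exfalso
    have h1 := hp.2.2.1
    rw [List.getLast?_cons_cons] at h1
    exact s_not_mem_tail hp rfl (mem_of_getLast?_eq h1)


/-- If `χ^P` and `χ^Q` are distinct nonadjacent vertices of the flow polytope, there is a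
distinct pair of vertices `χ^R`, `χ^S` with the same midpoint; hence the flow polytope
is a combinatorial polytope in the sense of Naddef and Pulleyblank. -/
theorem stmt8 (A : Finset (V × V)) (s t : V) (hA : Acyclic A)
    (p q : List V) (hp : IsPath A s t p) (hq : IsPath A s t q)
    (hne : chi p ≠ chi q)
    (hnonadj : ¬ AdjacentVerts (flowPolytope A s t) (chi p) (chi q)) :
    ∃ r u : List V, IsPath A s t r ∧ IsPath A s t u ∧
      (1 / 2 : ℝ) • (chi p + chi q) = (1 / 2 : ℝ) • (chi r + chi u) ∧
      ({chi r, chi u} : Set ((V × V) → ℝ)) ≠ {chi p, chi q} := by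
  by_cases hcross : ∃ (v : V) (p₁ p₂ q₁ q₂ : List V), p = p₁ ++ v :: p₂ ∧
      q = q₁ ++ v :: q₂ ∧ p₁ ≠ q₁ ∧ p₂ ≠ q₂
  · obtain ⟨v, p₁, p₂, q₁, q₂, hpe, hqe, hne₁, hne₂⟩ := hcross
    have hcp := List.isChain_append.1 (hpe ▸ hp.1)
    have hcq := List.isChain_append.1 (hqe ▸ hq.1)
    have hnp : (p₁ ++ v :: p₂).Nodup := hpe ▸ hp.2.2.2
    have hnq : (q₁ ++ v :: q₂).Nodup := hqe ▸ hq.2.2.2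
    rw [List.nodup_append'] at hnp hnq
    -- nonempty prefixes
    have h1nil : ∀ (m₁ m₂ n₁ n₂ : List V), p = m₁ ++ v :: m₂ → q = n₁ ++ v :: n₂ →
        m₁ = [] → n₁ = [] := by
      intro m₁ m₂ n₁ n₂ he1 he2 hm
      subst hm
      have hv : v = s := by
        have := hp.2.1
        rw [he1] at this
        simpa using this
      cases n₁ with
      | nil => rfl
      | cons c n₁' =>
        exfalso
        have hc : c = s := by
          have := hq.2.1
          rw [he2] at this
          simpa using this
        have hq2 : q = s :: (n₁' ++ v :: n₂) := by rw [he2, hc, List.cons_append]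
        exact s_not_mem_tail hq hq2 (by rw [hv]; simp)
    have h1nil' : ∀ (m₁ m₂ n₁ n₂ : List V), q = m₁ ++ v :: m₂ → p = n₁ ++ v :: n₂ →
        m₁ = [] → n₁ = [] := by
      intro m₁ m₂ n₁ n₂ he1 he2 hm
      subst hm
      have hv : v = s := by
        have := hq.2.1
        rw [he1] at this
        simpa using this
      cases n₁ with
      | nil => rfl
      | cons c n₁' =>
        exfalso
        have hc : c = s := by
          have := hp.2.1
          rw [he2] at this
          simpa using this
        have hp2 : p = s :: (n₁' ++ v :: n₂) := by rw [he2, hc, List.cons_append]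
        exact s_not_mem_tail hp hp2 (by rw [hv]; simp)
    have hp₁ne : p₁ ≠ [] := fun h => hne₁ (by rw [h, h1nil p₁ p₂ q₁ q₂ hpe hqe h])
    have hq₁ne : q₁ ≠ [] := fun h => hne₁ (by rw [h1nil' q₁ q₂ p₁ p₂ hqe hpe h, h])
    -- disjointness via acyclicity
    have hdisjPD : List.Disjoint p₁ (v :: q₂) := by
      intro z hz1 hz2
      rcases List.mem_cons.1 hz2 with rfl | hz2
      · exact hnp.2.2 hz1 (List.mem_cons_self)
      · have t1 := transGen_of_mem_left hp.1 hpe hz1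
        have t2 := transGen_of_mem_right hq.1 hqe hz2
        exact hA v (t2.trans t1)
    have hdisjQC : List.Disjoint q₁ (v :: p₂) := by
      intro z hz1 hz2
      rcases List.mem_cons.1 hz2 with rfl | hz2
      · exact hnq.2.2 hz1 (List.mem_cons_self)
      · have t1 := transGen_of_mem_left hq.1 hqe hz1
        have t2 := transGen_of_mem_right hp.1 hpe hz2
        exact hA v (t2.trans t1)
    have hhead : ∀ (m₁ : List V) (m₂ m₂' : List V), m₁ ≠ [] →
        (m₁ ++ v :: m₂).head? = (m₁ ++ v :: m₂').head? := by
      intro m₁ m₂ m₂' hm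
      cases m₁ with
      | nil => exact absurd rfl hm
      | cons a m₁' => simp
    have hrpath : IsPath A s t (p₁ ++ v :: q₂) := by
      refine ⟨?_, ?_, ?_, ?_⟩
      · refine List.isChain_append.2 ⟨hcp.1, hcq.2.1, ?_⟩
        intro x hx y hy
        simp only [List.head?_cons, Option.mem_some_iff] at hy
        subst hy
        exact hcp.2.2 x hx v (by simp)
      · rw [hhead p₁ q₂ p₂ hp₁ne, ← hpe]
        exact hp.2.1
      · rw [List.getLast?_append_cons, ← List.getLast?_append_cons q₁, ← hqe]
        exact hq.2.2.1
      · exact List.nodup_append'.2 ⟨hnp.1, hnq.2.1, hdisjPD⟩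
    have hupath : IsPath A s t (q₁ ++ v :: p₂) := by
      refine ⟨?_, ?_, ?_, ?_⟩
      · refine List.isChain_append.2 ⟨hcq.1, hcp.2.1, ?_⟩
        intro x hx y hy
        simp only [List.head?_cons, Option.mem_some_iff] at hy
        subst hy
        exact hcq.2.2 x hx v (by simp)
      · rw [hhead q₁ p₂ q₂ hq₁ne, ← hqe]
        exact hq.2.1
      · rw [List.getLast?_append_cons, ← List.getLast?_append_cons p₁, ← hpe]
        exact hp.2.2.1
      · exact List.nodup_append'.2 ⟨hnq.1, hnp.2.1, hdisjQC⟩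
    -- edge splits
    have hPEp : pathEdges p = pathEdges (p₁ ++ [v]) ++ pathEdges (v :: p₂) := by
      rw [hpe, pathEdges_append]
    have hPEq : pathEdges q = pathEdges (q₁ ++ [v]) ++ pathEdges (v :: q₂) := by
      rw [hqe, pathEdges_append]
    have hPEr : pathEdges (p₁ ++ v :: q₂) = pathEdges (p₁ ++ [v]) ++ pathEdges (v :: q₂) :=
      pathEdges_append v p₁ q₂
    have hPEu : pathEdges (q₁ ++ v :: p₂) = pathEdges (q₁ ++ [v]) ++ pathEdges (v :: p₂) :=
      pathEdges_append v q₁ p₂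
    -- edge-set disjointness
    have hedisj : ∀ (m₁ : List V) (m₂ : List V), List.Disjoint m₁ (v :: m₂) →
        ∀ e : V × V, e ∈ pathEdges (m₁ ++ [v]) → e ∈ pathEdges (v :: m₂) → False := by
      intro m₁ m₂ hd e he1 he2
      have h1 : e.1 ∈ m₁ := by
        have := fst_mem_dropLast he1
        rwa [List.dropLast_concat] at this
      have h2 : e.1 ∈ v :: m₂ := List.dropLast_subset _ (fst_mem_dropLast he2)
      exact hd h1 h2
    have hAC := hedisj p₁ p₂ (fun z h1 h2 => hnp.2.2 h1 h2)
    have hBD := hedisj q₁ q₂ (fun z h1 h2 => hnq.2.2 h1 h2)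
    have hAD := hedisj p₁ q₂ hdisjPD
    have hBC := hedisj q₁ p₂ hdisjQC
    refine ⟨p₁ ++ v :: q₂, q₁ ++ v :: p₂, hrpath, hupath, ?_, ?_⟩
    · apply congrArg
      funext a
      simp only [Pi.add_apply]
      rw [chi_split hPEp hAC a, chi_split hPEq hBD a, chi_split hPEr hAD a,
        chi_split hPEu hBC a]
      ring
    · -- first divergence on the prefix side
      have hnL₁ : (p₁ ++ [v]).Nodup := by
        refine List.Nodup.sublist ?_ (hpe ▸ hp.2.2.2)
        have : p₁ ++ [v] ++ p₂ = p₁ ++ v :: p₂ := by simp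
        exact this ▸ (p₁ ++ [v]).sublist_append_left p₂
      have hnL₂ : (q₁ ++ [v]).Nodup := by
        refine List.Nodup.sublist ?_ (hqe ▸ hq.2.2.2)
        have : q₁ ++ [v] ++ q₂ = q₁ ++ v :: q₂ := by simp
        exact this ▸ (q₁ ++ [v]).sublist_append_left q₂
      have hL12 : p₁ ++ [v] ≠ q₁ ++ [v] := fun h => hne₁ (List.append_cancel_right h)
      have hheadL : (p₁ ++ [v]).head? = (q₁ ++ [v]).head? := by
        cases p₁ with
        | nil => exact absurd rfl hp₁ne
        | cons a p₁' =>
          cases q₁ with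
          | nil => exact absurd rfl hq₁ne
          | cons c q₁' =>
            have ha : a = s := by
              have := hp.2.1
              rw [hpe] at this
              simpa using this
            have hc : c = s := by
              have := hq.2.1
              rw [hqe] at this
              simpa using this
            simp [ha, hc]
      have hlastL : (p₁ ++ [v]).getLast? = (q₁ ++ [v]).getLast? := by
        rw [List.getLast?_concat, List.getLast?_concat]
      obtain ⟨C, c, xx, yy, T₁, T₂, hC1, hC2, hxy⟩ := first_diff (p₁ ++ [v]) (q₁ ++ [v])
        hheadL hL12
        (not_prefix_of_getLast hL12 hnL₂ (by simp) hlastL)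
        (not_prefix_of_getLast (Ne.symm hL12) hnL₁ (by simp) hlastL.symm)
      have he1 : (c, xx) ∈ pathEdges (p₁ ++ [v]) := hC1 ▸ pathEdges_mem_adj c xx C T₁
      have he2 : (c, yy) ∈ pathEdges (q₁ ++ [v]) := hC2 ▸ pathEdges_mem_adj c yy C T₂
      -- first divergence on the suffix side
      have hnL₃ : (v :: p₂).Nodup := hnp.2.1
      have hnL₄ : (v :: q₂).Nodup := hnq.2.1
      have hL34 : (v :: p₂) ≠ (v :: q₂) := fun h => hne₂ (by injection h)
      have hlastS : (v :: p₂).getLast? = (v :: q₂).getLast? := by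
        rw [← List.getLast?_append_cons p₁, ← List.getLast?_append_cons q₁, ← hpe, ← hqe,
          hp.2.2.1, hq.2.2.1]
      obtain ⟨C', d, zz, ww, T₃, T₄, hD1, hD2, hzw⟩ := first_diff (v :: p₂) (v :: q₂)
        rfl hL34
        (not_prefix_of_getLast hL34 hnL₄ (by simp) hlastS)
        (not_prefix_of_getLast (Ne.symm hL34) hnL₃ (by simp) hlastS.symm)
      have hf1 : (d, zz) ∈ pathEdges (v :: p₂) := hD1 ▸ pathEdges_mem_adj d zz C' T₃
      have hf2 : (d, ww) ∈ pathEdges (v :: q₂) := hD2 ▸ pathEdges_mem_adj d ww C' T₄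
      -- chi r ≠ chi q, tested at (c, yy)
      have hrq : chi (p₁ ++ v :: q₂) ≠ chi q := by
        intro h
        have hcf := congrFun h (c, yy)
        have hm1 : (c, yy) ∈ pathEdges q := by rw [hPEq]; exact List.mem_append_left _ he2
        have hm2 : (c, yy) ∉ pathEdges (p₁ ++ v :: q₂) := by
          rw [hPEr]
          intro hc
          rcases List.mem_append.1 hc with hc | hc
          · exact hxy (snd_unique hnL₁ hc he1).symm
          · exact hBD _ he2 hc
        rw [chi_eq_one hm1, chi_eq_zero hm2] at hcf
        norm_num at hcf
      -- chi r ≠ chi p, tested at (d, ww)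
      have hrp : chi (p₁ ++ v :: q₂) ≠ chi p := by
        intro h
        have hcf := congrFun h (d, ww)
        have hm1 : (d, ww) ∈ pathEdges (p₁ ++ v :: q₂) := by
          rw [hPEr]; exact List.mem_append_right _ hf2
        have hm2 : (d, ww) ∉ pathEdges p := by
          rw [hPEp]
          intro hc
          rcases List.mem_append.1 hc with hc | hc
          · exact hAD _ hc hf2
          · exact hzw (snd_unique hnL₃ hf1 hc)
        rw [chi_eq_one hm1, chi_eq_zero hm2] at hcf
        norm_num at hcf
      intro hset
      have : chi (p₁ ++ v :: q₂) ∈ ({chi p, chi q} : Set ((V × V) → ℝ)) := by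
        rw [← hset]
        exact Set.mem_insert _ _
      rcases this with h | h
      · exact hrp h
      · exact hrq h
  · exfalso
    have hnc : ∀ (v : V) (p₁ p₂ q₁ q₂ : List V), p = p₁ ++ v :: p₂ → q = q₁ ++ v :: q₂ →
        p₁ = q₁ ∨ p₂ = q₂ := by
      intro v p₁ p₂ q₁ q₂ h1 h2
      by_contra h
      push_neg at h
      exact hcross ⟨v, p₁, p₂, q₁, q₂, h1, h2, h.1, h.2⟩
    have hst : s ≠ t := by
      intro h
      subst h
      rw [path_eq_single hp, path_eq_single hq] at hne
      exact hne rfl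
    have hpf : IsFlow A s t (chi p) := chi_isFlow hp hst
    have hqf : IsFlow A s t (chi q) := chi_isFlow hq hst
    apply hnonadj
    refine ⟨hne, fun _ => ?_⟩
    classical
    set E0 : Finset (V × V) := (pathEdges p).toFinset ∪ (pathEdges q).toFinset with hE0
    refine ⟨-(∑ a ∈ A \ E0, ContinuousLinearMap.proj (R := ℝ) (φ := fun _ : V × V => ℝ) a), ?_⟩
    set l : ((V × V) → ℝ) →L[ℝ] ℝ :=
      -(∑ a ∈ A \ E0, ContinuousLinearMap.proj (R := ℝ) (φ := fun _ : V × V => ℝ) a) with hldef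
    have hl : ∀ y : (V × V) → ℝ, l y = -∑ a ∈ A \ E0, y a := by
      intro y
      rw [hldef, ContinuousLinearMap.neg_apply, ContinuousLinearMap.sum_apply]
      simp [ContinuousLinearMap.proj_apply]
    have hle : ∀ y, y ∈ flowPolytope A s t → l y ≤ 0 := by
      intro y hy
      rw [hl]
      simp only [neg_nonpos]
      exact Finset.sum_nonneg fun a _ => hy.2.1 a
    have hlz : ∀ y : (V × V) → ℝ, (∀ a ∈ A \ E0, y a = 0) → l y = 0 := by
      intro y hy
      rw [hl, Finset.sum_eq_zero hy]
      simp
    have hchiz : ∀ a ∈ A \ E0, chi p a = 0 ∧ chi q a = 0 := by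
      intro a ha
      have h1 := (Finset.mem_sdiff.1 ha).2
      rw [hE0, Finset.mem_union, List.mem_toFinset, List.mem_toFinset] at h1
      push_neg at h1
      exact ⟨chi_eq_zero h1.1, chi_eq_zero h1.2⟩
    have hpS : chi p ∈ flowPolytope A s t := hpf
    have hqS : chi q ∈ flowPolytope A s t := hqf
    ext z
    simp only [Set.mem_setOf_eq, Set.mem_sep_iff]
    constructor
    · rintro ⟨a, b, ha, hb, hab, rfl⟩
      have hzS : a • chi p + b • chi q ∈ flowPolytope A s t := isFlow_combo hpf hqf ha hb hab
      refine ⟨hzS, fun y hy => ?_⟩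
      have : l (a • chi p + b • chi q) = 0 := hlz _ fun c hc => by
        have := hchiz c hc
        simp [this.1, this.2]
      rw [this]
      exact hle y hy
    · rintro ⟨hzS, hzmax⟩
      have h0 : l (chi p) = 0 := hlz _ fun c hc => (hchiz c hc).1
      have h1 : 0 ≤ l z := h0 ▸ hzmax (chi p) hpS
      have h2 : l z = 0 := le_antisymm (hle z hzS) h1
      have h3 : ∀ a ∈ A \ E0, z a = 0 := by
        rw [hl] at h2
        have h4 : ∑ a ∈ A \ E0, z a = 0 := by linarith
        intro a ha
        exact (Finset.sum_eq_zero_iff_of_nonneg fun c _ => hzS.2.1 c).1 h4 a ha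
      have hsupp : ∀ a, a ∉ pathEdges p → a ∉ pathEdges q → z a = 0 := by
        intro a hap haq
        by_cases hA' : a ∈ A
        · refine h3 a (Finset.mem_sdiff.2 ⟨hA', ?_⟩)
          rw [hE0, Finset.mem_union, List.mem_toFinset, List.mem_toFinset]
          push_neg
          exact ⟨hap, haq⟩
        · exact hzS.1 a hA'
      obtain ⟨lam, mu, hl0, hm0, hlm, heq⟩ :=
        key t p.length p q s z le_rfl hp hq hnc hzS hsupp
      exact ⟨lam, mu, hl0, hm0, hlm, heq⟩
end
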